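/- If σ is a complete cherry-reduction sequence of length k for a phylogenetic network N on X, then k = |X| + r(N) − 1, where r(N) is the reticulation number of N. -/
import Mathlib


/-!  Formalisation preliminaries for rooted and unrooted binary phylogenetic
networks, cherry reductions, cherry-reduction sequences and cherry-picking
sequences, following Döcker & Linz. -/

/-- A finite directed graph whose vertices are natural numbers. -/
structure DNet where
  verts : Finset ℕ
  arcs : Finset (ℕ × ℕ)

namespace DNet

/-- in-degree of a vertex -/
def inDeg (N : DNet) (v : ℕ) : ℕ := (N.arcs.filter (fun p => p.2 = v)).card

/-- out-degree of a vertex -/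
def outDeg (N : DNet) (v : ℕ) : ℕ := (N.arcs.filter (fun p => p.1 = v)).card

/-- the arc relation -/
def Arc (N : DNet) (u v : ℕ) : Prop := (u, v) ∈ N.arcs

/-- the digraph has no directed cycle -/
def Acyclic (N : DNet) : Prop := ∀ v, ¬ Relation.TransGen N.Arc v v

/-- root: in-degree 0 and out-degree 2 -/
def IsRoot (N : DNet) (v : ℕ) : Prop := v ∈ N.verts ∧ N.inDeg v = 0 ∧ N.outDeg v = 2

/-- leaf: in-degree 1 and out-degree 0 -/
def IsLeaf (N : DNet) (v : ℕ) : Prop := v ∈ N.verts ∧ N.inDeg v = 1 ∧ N.outDeg v = 0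

/-- tree vertex: in-degree 1 and out-degree 2 -/
def IsTreeVertex (N : DNet) (v : ℕ) : Prop := v ∈ N.verts ∧ N.inDeg v = 1 ∧ N.outDeg v = 2

/-- reticulation: in-degree 2 and out-degree 1 -/
def IsRet (N : DNet) (v : ℕ) : Prop := v ∈ N.verts ∧ N.inDeg v = 2 ∧ N.outDeg v = 1

/-- the network consists of a single vertex -/
def SingleVertex (N : DNet) : Prop := N.verts.card = 1 ∧ N.arcs = ∅

/-- the reticulation number of a rooted network: number of in-degree-2 vertices -/
def retNum (N : DNet) : ℕ := (N.verts.filter (fun v => N.inDeg v = 2)).card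

/-- tree-child: every vertex with a child has a child that is a tree vertex or a leaf -/
def TreeChild (N : DNet) : Prop :=
  ∀ v ∈ N.verts, N.outDeg v ≠ 0 → ∃ c, (v, c) ∈ N.arcs ∧ (N.IsTreeVertex c ∨ N.IsLeaf c)

/-- a stack: two reticulations joined by an arc -/
def HasStack (N : DNet) : Prop := ∃ u v, N.IsRet u ∧ N.IsRet v ∧ (u, v) ∈ N.arcs

/-- a pair of sibling reticulations: two reticulations with a common parent -/
def HasSiblingRets (N : DNet) : Prop :=
  ∃ p u v, u ≠ v ∧ N.IsRet u ∧ N.IsRet v ∧ (p, u) ∈ N.arcs ∧ (p, v) ∈ N.arcs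

/-- stack-free -/
def StackFree (N : DNet) : Prop := ¬ N.HasStack

end DNet

/-- `N` is a rooted binary phylogenetic network with leaf set `X`
(including the degenerate single-vertex network when `|X| = 1`). -/
def IsRootedBinaryNet (N : DNet) (X : Finset ℕ) : Prop :=
  (∃ x, X = {x} ∧ N.verts = {x} ∧ N.arcs = ∅) ∨
  ((∀ p ∈ N.arcs, p.1 ∈ N.verts ∧ p.2 ∈ N.verts) ∧
   (∀ p ∈ N.arcs, p.1 ≠ p.2) ∧
   N.Acyclic ∧
   (∃! ρ, ρ ∈ N.verts ∧ N.inDeg ρ = 0) ∧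
   (∀ v ∈ N.verts, N.IsRoot v ∨ N.IsLeaf v ∨ N.IsTreeVertex v ∨ N.IsRet v) ∧
   (∀ v, N.IsLeaf v ↔ v ∈ X))

/-- `[a,b]` is a cherry of the rooted network `N` (with `a` the leaf to be deleted). -/
def RCherry (N : DNet) (a b : ℕ) : Prop :=
  a ≠ b ∧ N.IsLeaf a ∧ N.IsLeaf b ∧ ∃ p, (p, a) ∈ N.arcs ∧ (p, b) ∈ N.arcs

/-- `(a,b)` is a reticulated cherry of the rooted network `N` with reticulation leaf `a`:
the parent of `a` is a reticulation and receives an arc from the parent of `b`. -/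
def RRetCherry (N : DNet) (a b : ℕ) : Prop :=
  a ≠ b ∧ N.IsLeaf a ∧ N.IsLeaf b ∧
  ∃ pa pb, (pa, a) ∈ N.arcs ∧ (pb, b) ∈ N.arcs ∧ N.IsRet pa ∧ (pb, pa) ∈ N.arcs

/-- `M` is obtained from the rooted network `N` by reducing the cherry `[a,b]`:
delete `a` and suppress (or, if it is the root, delete) the resulting degree-2 vertex. -/
def RReduceCherry (N M : DNet) (a b : ℕ) : Prop :=
  RCherry N a b ∧
  ∃ p, (p, a) ∈ N.arcs ∧ (p, b) ∈ N.arcs ∧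
    ((N.inDeg p = 0 ∧ M.verts = N.verts \ {a, p} ∧ M.arcs = N.arcs \ {(p, a), (p, b)}) ∨
     (∃ g, (g, p) ∈ N.arcs ∧ M.verts = N.verts \ {a, p} ∧
        M.arcs = insert (g, b) (N.arcs \ {(g, p), (p, a), (p, b)})))

/-- `M` is obtained from the rooted network `N` by reducing the reticulated cherry `(a,b)`
with reticulation leaf `a`: delete the reticulation arc `(p_b, p_a)` and suppress the two
resulting degree-2 vertices. -/
def RReduceRetCherry (N M : DNet) (a b : ℕ) : Prop :=
  RRetCherry N a b ∧
  ∃ pa pb qa qb, (pa, a) ∈ N.arcs ∧ (pb, b) ∈ N.arcs ∧ N.IsRet pa ∧ (pb, pa) ∈ N.arcs ∧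
    (qa, pa) ∈ N.arcs ∧ qa ≠ pb ∧ (qb, pb) ∈ N.arcs ∧
    M.verts = N.verts \ {pa, pb} ∧
    M.arcs = insert (qa, a) (insert (qb, b)
      (N.arcs \ {(pb, pa), (pa, a), (qa, pa), (pb, b), (qb, pb)}))

/-- A recorded reduction: either a cherry pair `[x,y]` or a reticulated-cherry pair `(x,y)`
(the deleted leaf, resp. the reticulation leaf, is listed first). -/
inductive Pick where
  | cherry (x y : ℕ)
  | ret (x y : ℕ)
deriving DecidableEq

namespace Pick

/-- first coordinate -/
def fst : Pick → ℕ
  | cherry x _ => x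
  | ret x _ => x

/-- second coordinate -/
def snd : Pick → ℕ
  | cherry _ y => y
  | ret _ y => y

/-- the pair contains the element `z` -/
def Contains (r : Pick) (z : ℕ) : Prop := r.fst = z ∨ r.snd = z

/-- the pair is a reticulated-cherry pair -/
def IsRetPair : Pick → Prop
  | cherry _ _ => False
  | ret _ _ => True

/-- the pair is a cherry pair -/
def IsCherryPair : Pick → Prop
  | cherry _ _ => True
  | ret _ _ => False

end Pick

/-- The step from `N` to `M` is the cherry reduction recorded by the pick `r`
(rooted version). -/
def RStep (N M : DNet) : Pick → Prop
  | .cherry x y => RReduceCherry N M x y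
  | .ret x y => RReduceRetCherry N M x y

/-- `(Ns 0, …, Ns k)` is a cherry-reduction sequence of rooted networks whose associated
cherry-picking sequence is `(rs 0, …, rs (k-1))`. -/
def RCherrySeq (Ns : ℕ → DNet) (rs : ℕ → Pick) (k : ℕ) : Prop :=
  ∀ i < k, RStep (Ns i) (Ns (i + 1)) (rs i)

/-- `(Ns 0, …, Ns k)` is a cherry-reduction sequence of rooted networks. -/
def RReductionSeq (Ns : ℕ → DNet) (k : ℕ) : Prop :=
  ∀ i < k, ∃ r, RStep (Ns i) (Ns (i + 1)) r

/-- `R` is a rooted orchard network: it admits a complete cherry-reduction sequence. -/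
def Orchard (R : DNet) : Prop :=
  ∃ Ns k, Ns 0 = R ∧ RReductionSeq Ns k ∧ (Ns k).SingleVertex

/-- `j = s(i)`: the smallest index `j > i` (within the sequence of length `k`) such that
`rs j` contains the first coordinate of `rs i`. -/
def SuccAt (rs : ℕ → Pick) (k i j : ℕ) : Prop :=
  i < j ∧ j < k ∧ (rs j).Contains (rs i).fst ∧
  ∀ l, i < l → l < j → ¬ (rs l).Contains (rs i).fst

/-- Property (P1): the successor pair of every reticulated-cherry pair, if it exists,
is a cherry pair. -/
def SeqP1 (rs : ℕ → Pick) (k : ℕ) : Prop :=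
  ∀ i j, (rs i).IsRetPair → SuccAt rs k i j → (rs j).IsCherryPair

/-- Property (P2): no element of the sequence is the successor pair of two distinct
reticulated-cherry pairs. -/
def SeqP2 (rs : ℕ → Pick) (k : ℕ) : Prop :=
  ∀ i i' j, i ≠ i' → (rs i).IsRetPair → (rs i').IsRetPair →
    SuccAt rs k i j → SuccAt rs k i' j → False

/-- A tree-child cherry-picking sequence: one satisfying (P1) and (P2). -/
def TreeChildSeq (rs : ℕ → Pick) (k : ℕ) : Prop := SeqP1 rs k ∧ SeqP2 rs k

/-- Property (P3): the first coordinate of each pair does not occur as the second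
coordinate of any later pair. -/
def SeqP3 (rs : ℕ → Pick) (k : ℕ) : Prop :=
  ∀ i j, i < j → j < k → (rs i).fst ≠ (rs j).snd

/-- A finite undirected graph whose vertices are natural numbers. -/
structure UNet where
  verts : Finset ℕ
  edges : Finset (Sym2 ℕ)

namespace UNet

/-- degree of a vertex -/
def deg (U : UNet) (v : ℕ) : ℕ := (U.edges.filter (fun e => v ∈ e)).card

/-- adjacency -/
def Adj (U : UNet) (u v : ℕ) : Prop := u ≠ v ∧ s(u, v) ∈ U.edges

/-- connectedness -/
def Connected (U : UNet) : Prop :=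
  ∀ u ∈ U.verts, ∀ v ∈ U.verts, Relation.ReflTransGen U.Adj u v

/-- leaf: degree-1 vertex -/
def IsLeaf (U : UNet) (v : ℕ) : Prop := v ∈ U.verts ∧ U.deg v = 1

/-- the network consists of a single vertex -/
def SingleVertex (U : UNet) : Prop := U.verts.card = 1 ∧ U.edges = ∅

/-- the reticulation number of an unrooted network: `|E| - (|V| - 1)` -/
def retNum (U : UNet) : ℕ := U.edges.card - (U.verts.card - 1)

end UNet

/-- `U` is an unrooted binary phylogenetic network with leaf set `X`
(including the degenerate single-vertex network when `|X| = 1`). -/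
def IsUnrootedBinaryNet (U : UNet) (X : Finset ℕ) : Prop :=
  (∃ x, X = {x} ∧ U.verts = {x} ∧ U.edges = ∅) ∨
  ((∀ e ∈ U.edges, ¬ e.IsDiag ∧ ∀ v ∈ e, v ∈ U.verts) ∧
   U.Connected ∧
   (∀ v ∈ U.verts, U.deg v = 1 ∨ U.deg v = 3) ∧
   (∀ v, U.IsLeaf v ↔ v ∈ X))

/-- `[a,b]` is a cherry of the unrooted network `U`. -/
def UCherry (U : UNet) (a b : ℕ) : Prop :=
  a ≠ b ∧ U.IsLeaf a ∧ U.IsLeaf b ∧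
  ((∃ p, s(a, p) ∈ U.edges ∧ s(b, p) ∈ U.edges ∧ p ≠ a ∧ p ≠ b) ∨ U.edges = {s(a, b)})

/-- the edge `{u,v}` lies on a cycle of `U` -/
def UOnCycle (U : UNet) (u v : ℕ) : Prop :=
  s(u, v) ∈ U.edges ∧
  Relation.ReflTransGen (fun x y => x ≠ y ∧ s(x, y) ∈ U.edges ∧ s(x, y) ≠ s(u, v)) u v

/-- `(a,b)` is a reticulated cherry of the unrooted network `U` with reticulation
edge `{u,v}`. -/
def URetCherry (U : UNet) (a b : ℕ) : Prop :=
  a ≠ b ∧ U.IsLeaf a ∧ U.IsLeaf b ∧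
  ∃ u v, s(a, u) ∈ U.edges ∧ s(u, v) ∈ U.edges ∧ s(v, b) ∈ U.edges ∧
    u ≠ v ∧ u ≠ a ∧ v ≠ b ∧ UOnCycle U u v

/-- `W` is obtained from `U` by reducing the cherry `[a,b]`: delete `a` and, if `U` has
at least two edges, suppress the resulting degree-2 vertex. -/
def UReduceCherry (U W : UNet) (a b : ℕ) : Prop :=
  UCherry U a b ∧
  ((U.edges = {s(a, b)} ∧ W.verts = U.verts \ {a} ∧ W.edges = ∅) ∨
   (∃ p g, s(a, p) ∈ U.edges ∧ s(b, p) ∈ U.edges ∧ s(p, g) ∈ U.edges ∧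
      p ≠ a ∧ p ≠ b ∧ g ≠ a ∧ g ≠ b ∧ g ≠ p ∧
      W.verts = U.verts \ {a, p} ∧
      W.edges = insert s(b, g) (U.edges \ {s(a, p), s(b, p), s(p, g)})))

/-- `W` is obtained from `U` by reducing the reticulated cherry `(a,b)`: delete the
reticulation edge `{u,v}` and suppress the two resulting degree-2 vertices. -/
def UReduceRetCherry (U W : UNet) (a b : ℕ) : Prop :=
  URetCherry U a b ∧
  ∃ u v ga gb, s(a, u) ∈ U.edges ∧ s(u, v) ∈ U.edges ∧ s(v, b) ∈ U.edges ∧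
    u ≠ v ∧ u ≠ a ∧ v ≠ b ∧ UOnCycle U u v ∧
    s(u, ga) ∈ U.edges ∧ ga ≠ a ∧ ga ≠ v ∧ ga ≠ u ∧
    s(v, gb) ∈ U.edges ∧ gb ≠ b ∧ gb ≠ u ∧ gb ≠ v ∧
    W.verts = U.verts \ {u, v} ∧
    W.edges = insert s(a, ga) (insert s(b, gb)
      (U.edges \ {s(u, v), s(a, u), s(u, ga), s(v, b), s(v, gb)}))

/-- The step from `U` to `W` is the cherry reduction recorded by the pick `r`
(unrooted version). -/
def UStep (U W : UNet) : Pick → Prop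
  | .cherry x y => UReduceCherry U W x y
  | .ret x y => UReduceRetCherry U W x y

/-- `(Us 0, …, Us k)` is a cherry-reduction sequence of unrooted networks whose associated
cherry-picking sequence is `(rs 0, …, rs (k-1))`. -/
def UCherrySeq (Us : ℕ → UNet) (rs : ℕ → Pick) (k : ℕ) : Prop :=
  ∀ i < k, UStep (Us i) (Us (i + 1)) (rs i)

/-- `(Us 0, …, Us k)` is a cherry-reduction sequence of unrooted networks. -/
def UReductionSeq (Us : ℕ → UNet) (k : ℕ) : Prop :=
  ∀ i < k, ∃ r, UStep (Us i) (Us (i + 1)) r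

/-- The rooted network `R` is an orientation of the unrooted network `U`: `U` is obtained
from `R` by forgetting arc directions and suppressing the root. -/
def IsOrientationOf (R : DNet) (U : UNet) : Prop :=
  (R.arcs = ∅ ∧ U.edges = ∅ ∧ U.verts = R.verts) ∨
  (∃ ρ c₁ c₂, ρ ∈ R.verts ∧ R.inDeg ρ = 0 ∧ c₁ ≠ c₂ ∧
    (ρ, c₁) ∈ R.arcs ∧ (ρ, c₂) ∈ R.arcs ∧
    U.verts = R.verts.erase ρ ∧
    U.edges = insert s(c₁, c₂)
      ((R.arcs.filter (fun p => p.1 ≠ ρ)).image (fun p => s(p.1, p.2))))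

/-- `U` is an unrooted tree-child network on `X`: it has a tree-child orientation. -/
def UnrootedTreeChild (U : UNet) (X : Finset ℕ) : Prop :=
  ∃ R : DNet, IsRootedBinaryNet R X ∧ R.TreeChild ∧ IsOrientationOf R U

/-- The pick `r` is one of the picks associated with the recorded reduction `p`:
it must agree with `p` on cherry reductions, and may swap the two coordinates of a
reticulated-cherry reduction. -/
def PickAssoc : Pick → Pick → Prop
  | .cherry x y, r => r = .cherry x y
  | .ret x y, r => r = .ret x y ∨ r = .ret y x

/-- `X`-labelled isomorphism of unrooted networks. -/
def UIso (X : Finset ℕ) (U W : UNet) : Prop :=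
  ∃ f : ℕ → ℕ, Set.BijOn f ↑U.verts ↑W.verts ∧ (∀ x ∈ X, f x = x) ∧
    W.edges = U.edges.image (Sym2.map f)


namespace CSL

lemma fin1 {α} [DecidableEq α] {s : Finset α} {a : α} (h : s.card = 1) (ha : a ∈ s) :
    s = {a} := by
  obtain ⟨x, rfl⟩ := Finset.card_eq_one.mp h
  simp_all

lemma fin2 {α} [DecidableEq α] {s : Finset α} {a b : α} (h : s.card = 2)
    (ha : a ∈ s) (hb : b ∈ s) (hab : a ≠ b) : s = {a, b} := by
  have hsub : ({a, b} : Finset α) ⊆ s := by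
    intro x hx; simp at hx; rcases hx with rfl | rfl <;> assumption
  refine (Finset.eq_of_subset_of_card_le hsub ?_).symm
  rw [h, Finset.card_insert_of_notMem (by simp [hab]), Finset.card_singleton]

lemma fin3 {α} [DecidableEq α] {s : Finset α} {a b c : α} (h : s.card = 3)
    (ha : a ∈ s) (hb : b ∈ s) (hc : c ∈ s) (hab : a ≠ b) (hac : a ≠ c) (hbc : b ≠ c) :
    s = {a, b, c} := by
  have hsub : ({a, b, c} : Finset α) ⊆ s := by
    intro x hx; simp at hx; rcases hx with rfl | rfl | rfl <;> assumption
  refine (Finset.eq_of_subset_of_card_le hsub ?_).symm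
  rw [h, Finset.card_insert_of_notMem (by simp [hab, hac]),
    Finset.card_insert_of_notMem (by simp [hbc]), Finset.card_singleton]

lemma card_ins_sdiff1 {α} [DecidableEq α] {s : Finset α} {x y : α} (hx : x ∉ s) (hy : y ∈ s) :
    (insert x (s \ {y})).card = s.card := by
  rw [Finset.card_insert_of_notMem (fun h => hx (Finset.mem_sdiff.mp h).1),
      Finset.card_sdiff_of_subset (Finset.singleton_subset_iff.mpr hy), Finset.card_singleton]
  have : 1 ≤ s.card := Finset.card_pos.mpr ⟨y, hy⟩
  omega

lemma card_ins_sdiff2 {α} [DecidableEq α] {s : Finset α} {x1 x2 y1 y2 : α}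
    (hx1 : x1 ∉ s) (hx2 : x2 ∉ s) (hx : x1 ≠ x2) (hy1 : y1 ∈ s) (hy2 : y2 ∈ s) (hy : y1 ≠ y2) :
    (insert x1 (insert x2 (s \ {y1, y2}))).card = s.card := by
  have hsub : ({y1, y2} : Finset α) ⊆ s := by
    intro x hxx; simp at hxx; rcases hxx with rfl | rfl <;> assumption
  have h2 : 2 ≤ s.card := by
    calc 2 = ({y1, y2} : Finset α).card := (Finset.card_pair hy).symm
    _ ≤ s.card := Finset.card_le_card hsub
  rw [Finset.card_insert_of_notMem (by
      simp only [Finset.mem_insert, Finset.mem_sdiff]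
      rintro (rfl | ⟨h, -⟩) <;> [exact hx rfl; exact hx1 h]),
    Finset.card_insert_of_notMem (fun h => hx2 (Finset.mem_sdiff.mp h).1),
    Finset.card_sdiff_of_subset hsub, Finset.card_pair hy]
  omega

-- membership control lemmas
lemma snd_all1 {N : DNet} {v p : ℕ} (h : N.inDeg v = 1) (hp : (p, v) ∈ N.arcs) :
    ∀ q ∈ N.arcs, q.2 = v → q = (p, v) := by
  intro q hq h2
  have h' : (N.arcs.filter (fun q => q.2 = v)).card = 1 := h
  have hf := fin1 h' (by simp only [Finset.mem_filter]; exact ⟨hp, rfl⟩)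
  have hqf : q ∈ N.arcs.filter (fun q => q.2 = v) := by
    simp only [Finset.mem_filter]; exact ⟨hq, h2⟩
  rw [hf] at hqf; simpa using hqf

lemma snd_all2 {N : DNet} {v p1 p2 : ℕ} (h : N.inDeg v = 2) (hp1 : (p1, v) ∈ N.arcs)
    (hp2 : (p2, v) ∈ N.arcs) (hne : p1 ≠ p2) :
    ∀ q ∈ N.arcs, q.2 = v → q = (p1, v) ∨ q = (p2, v) := by
  intro q hq h2
  have h' : (N.arcs.filter (fun q => q.2 = v)).card = 2 := h
  have hf := fin2 h' (s := N.arcs.filter (fun q => q.2 = v))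
    (by simp only [Finset.mem_filter]; exact ⟨hp1, rfl⟩)
    (by simp only [Finset.mem_filter]; exact ⟨hp2, rfl⟩)
    (by simpa using hne)
  have hqf : q ∈ N.arcs.filter (fun q => q.2 = v) := by
    simp only [Finset.mem_filter]; exact ⟨hq, h2⟩
  rw [hf] at hqf; simpa using hqf

lemma snd_all0 {N : DNet} {v : ℕ} (h : N.inDeg v = 0) : ∀ q ∈ N.arcs, q.2 ≠ v := by
  intro q hq h2
  have h' : N.arcs.filter (fun q => q.2 = v) = ∅ := Finset.card_eq_zero.mp h
  have hqf : q ∈ N.arcs.filter (fun q => q.2 = v) := by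
    simp only [Finset.mem_filter]; exact ⟨hq, h2⟩
  simp [h'] at hqf

lemma fst_all1 {N : DNet} {v c : ℕ} (h : N.outDeg v = 1) (hp : (v, c) ∈ N.arcs) :
    ∀ q ∈ N.arcs, q.1 = v → q = (v, c) := by
  intro q hq h2
  have h' : (N.arcs.filter (fun q => q.1 = v)).card = 1 := h
  have hf := fin1 h' (by simp only [Finset.mem_filter]; exact ⟨hp, rfl⟩)
  have hqf : q ∈ N.arcs.filter (fun q => q.1 = v) := by
    simp only [Finset.mem_filter]; exact ⟨hq, h2⟩
  rw [hf] at hqf; simpa using hqf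

lemma fst_all2 {N : DNet} {v c1 c2 : ℕ} (h : N.outDeg v = 2) (hp1 : (v, c1) ∈ N.arcs)
    (hp2 : (v, c2) ∈ N.arcs) (hne : c1 ≠ c2) :
    ∀ q ∈ N.arcs, q.1 = v → q = (v, c1) ∨ q = (v, c2) := by
  intro q hq h2
  have h' : (N.arcs.filter (fun q => q.1 = v)).card = 2 := h
  have hf := fin2 h' (s := N.arcs.filter (fun q => q.1 = v))
    (by simp only [Finset.mem_filter]; exact ⟨hp1, rfl⟩)
    (by simp only [Finset.mem_filter]; exact ⟨hp2, rfl⟩)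
    (by simpa using hne)
  have hqf : q ∈ N.arcs.filter (fun q => q.1 = v) := by
    simp only [Finset.mem_filter]; exact ⟨hq, h2⟩
  rw [hf] at hqf; simpa using hqf

lemma fst_all0 {N : DNet} {v : ℕ} (h : N.outDeg v = 0) : ∀ q ∈ N.arcs, q.1 ≠ v := by
  intro q hq h2
  have h' : N.arcs.filter (fun q => q.1 = v) = ∅ := Finset.card_eq_zero.mp h
  have hqf : q ∈ N.arcs.filter (fun q => q.1 = v) := by
    simp only [Finset.mem_filter]; exact ⟨hq, h2⟩
  simp [h'] at hqf

lemma two_le_outDeg {N : DNet} {v c1 c2 : ℕ} (h1 : (v, c1) ∈ N.arcs) (h2 : (v, c2) ∈ N.arcs)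
    (h : c1 ≠ c2) : 2 ≤ N.outDeg v := by
  have hsub : ({(v, c1), (v, c2)} : Finset (ℕ × ℕ)) ⊆ N.arcs.filter (fun q => q.1 = v) := by
    intro x hx; simp at hx
    rcases hx with rfl | rfl <;> exact Finset.mem_filter.mpr ⟨by assumption, rfl⟩
  calc 2 = ({(v, c1), (v, c2)} : Finset (ℕ × ℕ)).card := by
        rw [Finset.card_pair (by simp [h])]
    _ ≤ _ := Finset.card_le_card hsub

lemma one_le_inDeg {N : DNet} {v p : ℕ} (h1 : (p, v) ∈ N.arcs) : 1 ≤ N.inDeg v := by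
  have : (p, v) ∈ N.arcs.filter (fun q => q.2 = v) := Finset.mem_filter.mpr ⟨h1, rfl⟩
  exact Finset.card_pos.mpr ⟨_, this⟩

lemma two_le_inDeg {N : DNet} {v p1 p2 : ℕ} (h1 : (p1, v) ∈ N.arcs) (h2 : (p2, v) ∈ N.arcs)
    (h : p1 ≠ p2) : 2 ≤ N.inDeg v := by
  have hsub : ({(p1, v), (p2, v)} : Finset (ℕ × ℕ)) ⊆ N.arcs.filter (fun q => q.2 = v) := by
    intro x hx; simp at hx
    rcases hx with rfl | rfl <;> exact Finset.mem_filter.mpr ⟨by assumption, rfl⟩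
  calc 2 = ({(p1, v), (p2, v)} : Finset (ℕ × ℕ)).card := by
        rw [Finset.card_pair (by simp [h])]
    _ ≤ _ := Finset.card_le_card hsub

/-- Invariant preserved along rooted reduction sequences. -/
def GoodD (N : DNet) : Prop :=
  (∀ p ∈ N.arcs, p.1 ∈ N.verts ∧ p.2 ∈ N.verts ∧ p.1 ≠ p.2) ∧
  (∀ v ∈ N.verts,
    (N.inDeg v = 0 ∧ N.outDeg v = 0) ∨ (N.inDeg v = 0 ∧ N.outDeg v = 2) ∨
    (N.inDeg v = 1 ∧ N.outDeg v = 0) ∨ (N.inDeg v = 1 ∧ N.outDeg v = 2) ∨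
    (N.inDeg v = 2 ∧ N.outDeg v = 1))

lemma inDeg_congr {M N : DNet} {v : ℕ}
    (h : ∀ q, (q ∈ M.arcs ∧ q.2 = v) ↔ (q ∈ N.arcs ∧ q.2 = v)) : M.inDeg v = N.inDeg v := by
  unfold DNet.inDeg
  congr 1
  ext q
  simp only [Finset.mem_filter]
  exact h q

lemma outDeg_congr {M N : DNet} {v : ℕ}
    (h : ∀ q, (q ∈ M.arcs ∧ q.1 = v) ↔ (q ∈ N.arcs ∧ q.1 = v)) : M.outDeg v = N.outDeg v := by
  unfold DNet.outDeg
  congr 1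
  ext q
  simp only [Finset.mem_filter]
  exact h q

lemma stepD_cherry {N M : DNet} {a b : ℕ} (hG : GoodD N) (hs : RReduceCherry N M a b) :
    GoodD M ∧ M.verts.card + 2 = N.verts.card := by
  obtain ⟨⟨hab, haL, hbL, -⟩, p, hpa, hpb, hcase⟩ := hs
  obtain ⟨haV, haI, haO⟩ := haL
  obtain ⟨hbV, hbI, hbO⟩ := hbL
  have hpV : p ∈ N.verts := (hG.1 _ hpa).1
  have hpa' : p ≠ a := (hG.1 _ hpa).2.2
  have hpb' : p ≠ b := (hG.1 _ hpb).2.2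
  have houtp : N.outDeg p = 2 := by
    have h2 := two_le_outDeg hpa hpb hab
    rcases hG.2 p hpV with ⟨h, h'⟩ | ⟨h, h'⟩ | ⟨h, h'⟩ | ⟨h, h'⟩ | ⟨h, h'⟩ <;> omega
  have hfstp := fst_all2 houtp hpa hpb hab
  have hsnda := snd_all1 haI hpa
  have hsndb := snd_all1 hbI hpb
  have hfsta := fst_all0 haO
  have hfstb := fst_all0 hbO
  have hvc : (N.verts \ {a, p}).card + 2 = N.verts.card := by
    have hsub : ({a, p} : Finset ℕ) ⊆ N.verts := by
      intro x hx; simp at hx; rcases hx with rfl | rfl <;> assumption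
    have hle := Finset.card_le_card hsub
    rw [Finset.card_sdiff_of_subset hsub, Finset.card_pair (Ne.symm hpa')]
    rw [Finset.card_pair (Ne.symm hpa')] at hle
    omega
  rcases hcase with ⟨hrt, hMv, hMa⟩ | ⟨g, hgp, hMv, hMa⟩
  · -- root case
    have hsndp := snd_all0 hrt
    have hchar : ∀ q, q ∈ M.arcs ↔ q ∈ N.arcs ∧ q ≠ (p, a) ∧ q ≠ (p, b) := by
      intro q; rw [hMa]
      simp only [Finset.mem_sdiff, Finset.mem_insert, Finset.mem_singleton]
      tauto
    have hav : ∀ q ∈ M.arcs, q.1 ≠ a ∧ q.2 ≠ a ∧ q.1 ≠ p ∧ q.2 ≠ p := by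
      intro q hq
      rw [hchar] at hq
      obtain ⟨hqN, h1, h2⟩ := hq
      refine ⟨hfsta q hqN, fun h => h1 (hsnda q hqN h), fun h => ?_, hsndp q hqN⟩
      rcases hfstp q hqN h with h' | h'
      · exact h1 h'
      · exact h2 h'
    refine ⟨⟨?_, ?_⟩, by rw [hMv]; exact hvc⟩
    · intro q hq
      obtain ⟨h1, h2, h3, h4⟩ := hav q hq
      have hqN := ((hchar q).1 hq).1
      obtain ⟨e1, e2, e3⟩ := hG.1 q hqN
      rw [hMv]
      simp only [Finset.mem_sdiff, Finset.mem_insert, Finset.mem_singleton]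
      exact ⟨⟨e1, by tauto⟩, ⟨e2, by tauto⟩, e3⟩
    · intro v hv
      rw [hMv] at hv
      simp only [Finset.mem_sdiff, Finset.mem_insert, Finset.mem_singleton] at hv
      obtain ⟨hvN, hv'⟩ := hv
      have hva : v ≠ a := fun h => hv' (Or.inl h)
      have hvp : v ≠ p := fun h => hv' (Or.inr h)
      by_cases hvb : v = b
      · subst hvb
        left
        constructor
        · rw [DNet.inDeg, Finset.card_eq_zero, Finset.eq_empty_iff_forall_notMem]
          intro q hq
          simp only [Finset.mem_filter] at hq
          obtain ⟨hq, hq2⟩ := hq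
          rw [hchar] at hq
          exact hq.2.2 (hsndb q hq.1 hq2)
        · rw [DNet.outDeg, Finset.card_eq_zero, Finset.eq_empty_iff_forall_notMem]
          intro q hq
          simp only [Finset.mem_filter] at hq
          obtain ⟨hq, hq2⟩ := hq
          rw [hchar] at hq
          exact hfstb q hq.1 hq2
      · have hi : M.inDeg v = N.inDeg v := inDeg_congr (fun q => by
          rw [hchar]
          constructor
          · tauto
          · rintro ⟨hqN, h2⟩
            refine ⟨⟨hqN, ?_, ?_⟩, h2⟩
            · rintro rfl; exact hva h2.symm
            · rintro rfl; exact hvb h2.symm)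
        have ho : M.outDeg v = N.outDeg v := outDeg_congr (fun q => by
          rw [hchar]
          constructor
          · tauto
          · rintro ⟨hqN, h2⟩
            refine ⟨⟨hqN, ?_, ?_⟩, h2⟩
            · rintro rfl; exact hvp h2.symm
            · rintro rfl; exact hvp h2.symm)
        rw [hi, ho]
        exact hG.2 v hvN
  · -- non-root case
    have hgV : g ∈ N.verts := (hG.1 _ hgp).1
    have hgp' : g ≠ p := (hG.1 _ hgp).2.2
    have hinp : N.inDeg p = 1 := by
      have h1 := one_le_inDeg hgp
      rcases hG.2 p hpV with ⟨h, h'⟩ | ⟨h, h'⟩ | ⟨h, h'⟩ | ⟨h, h'⟩ | ⟨h, h'⟩ <;> omega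
    have hsndp := snd_all1 hinp hgp
    have hga : g ≠ a := fun h => hfsta _ hgp (h ▸ rfl)
    have hgb : g ≠ b := fun h => hfstb _ hgp (h ▸ rfl)
    have hgbN : (g, b) ∉ N.arcs := by
      intro h
      have := hsndb _ h rfl
      simp at this
      exact hgp' this
    have hchar : ∀ q, q ∈ M.arcs ↔
        q = (g, b) ∨ (q ∈ N.arcs ∧ q ≠ (g, p) ∧ q ≠ (p, a) ∧ q ≠ (p, b)) := by
      intro q; rw [hMa]
      simp only [Finset.mem_insert, Finset.mem_sdiff, Finset.mem_singleton]
      tauto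
    have hav : ∀ q ∈ M.arcs, q ≠ (g, b) → q.1 ≠ a ∧ q.2 ≠ a ∧ q.1 ≠ p ∧ q.2 ≠ p := by
      intro q hq hne
      rw [hchar] at hq
      rcases hq with rfl | ⟨hqN, h1, h2, h3⟩
      · exact absurd rfl hne
      refine ⟨hfsta q hqN, fun h => h2 (hsnda q hqN h), fun h => ?_, fun h => h1 (hsndp q hqN h)⟩
      rcases hfstp q hqN h with h' | h'
      · exact h2 h'
      · exact h3 h'
    refine ⟨⟨?_, ?_⟩, by rw [hMv]; exact hvc⟩
    · intro q hq
      rw [hMv]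
      simp only [Finset.mem_sdiff, Finset.mem_insert, Finset.mem_singleton]
      by_cases hne : q = (g, b)
      · subst hne
        exact ⟨⟨hgV, by tauto⟩, ⟨hbV, by tauto⟩, hgb⟩
      · obtain ⟨h1, h2, h3, h4⟩ := hav q hq hne
        have hqN : q ∈ N.arcs := by
          rcases (hchar q).1 hq with h | h
          · exact absurd h hne
          · exact h.1
        obtain ⟨e1, e2, e3⟩ := hG.1 q hqN
        exact ⟨⟨e1, by tauto⟩, ⟨e2, by tauto⟩, e3⟩
    · intro v hv
      rw [hMv] at hv
      simp only [Finset.mem_sdiff, Finset.mem_insert, Finset.mem_singleton] at hv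
      obtain ⟨hvN, hv'⟩ := hv
      have hva : v ≠ a := fun h => hv' (Or.inl h)
      have hvp : v ≠ p := fun h => hv' (Or.inr h)
      by_cases hvb : v = b
      · subst hvb
        right; right; left
        constructor
        · -- inDeg M b = 1 : filter = {(g,b)}
          rw [DNet.inDeg]
          have : M.arcs.filter (fun q => q.2 = v) = {(g, v)} := by
            ext q
            simp only [Finset.mem_filter, Finset.mem_singleton]
            constructor
            · rintro ⟨hq, hq2⟩
              rcases (hchar q).1 hq with h | ⟨hqN, h1, h2, h3⟩
              · exact h
              · exact absurd (hsndb q hqN hq2) h3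
            · rintro rfl
              exact ⟨(hchar _).2 (Or.inl rfl), rfl⟩
          rw [this, Finset.card_singleton]
        · rw [DNet.outDeg, Finset.card_eq_zero, Finset.eq_empty_iff_forall_notMem]
          intro q hq
          simp only [Finset.mem_filter] at hq
          obtain ⟨hq, hq2⟩ := hq
          rcases (hchar q).1 hq with h | ⟨hqN, h1, h2, h3⟩
          · rw [h] at hq2; exact hgb hq2
          · exact hfstb q hqN hq2
      · by_cases hvg : v = g
        · subst hvg
          have hi : M.inDeg v = N.inDeg v := inDeg_congr (fun q => by
            rw [hchar]
            constructor
            · rintro ⟨rfl | ⟨hqN, h1, h2, h3⟩, h4⟩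
              · exact absurd h4 (Ne.symm hgb)
              · exact ⟨hqN, h4⟩
            · rintro ⟨hqN, h2⟩
              refine ⟨Or.inr ⟨hqN, ?_, ?_, ?_⟩, h2⟩
              · rintro rfl; exact hgp' h2.symm
              · rintro rfl; exact hva h2.symm
              · rintro rfl; exact hvb h2.symm)
          have ho : M.outDeg v = N.outDeg v := by
            rw [DNet.outDeg]
            have hfe : M.arcs.filter (fun q => q.1 = v) =
                insert (v, b) ((N.arcs.filter (fun q => q.1 = v)) \ {(v, p)}) := by
              ext q
              simp only [Finset.mem_filter, Finset.mem_insert, Finset.mem_sdiff,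
                Finset.mem_singleton]
              constructor
              · rintro ⟨hq, hq1⟩
                rcases (hchar q).1 hq with h | ⟨hqN, h1, h2, h3⟩
                · exact Or.inl h
                · exact Or.inr ⟨⟨hqN, hq1⟩, h1⟩
              · rintro (rfl | ⟨⟨hqN, hq1⟩, h1⟩)
                · exact ⟨(hchar _).2 (Or.inl rfl), rfl⟩
                refine ⟨(hchar q).2 (Or.inr ⟨hqN, h1, ?_, ?_⟩), hq1⟩
                · rintro rfl; exact hgp' hq1.symm
                · rintro rfl; exact hgp' hq1.symm
            rw [hfe]
            have hmem : (v, p) ∈ N.arcs.filter (fun q => q.1 = v) :=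
              Finset.mem_filter.mpr ⟨hgp, rfl⟩
            have hnmem : (v, b) ∉ N.arcs.filter (fun q => q.1 = v) :=
              fun h => hgbN (Finset.mem_filter.mp h).1
            exact card_ins_sdiff1 hnmem hmem
          rw [hi, ho]
          exact hG.2 v hvN
        · have hi : M.inDeg v = N.inDeg v := inDeg_congr (fun q => by
            rw [hchar]
            constructor
            · rintro ⟨rfl | ⟨hqN, h1, h2, h3⟩, h4⟩
              · exact absurd h4 (Ne.symm hvb)
              · exact ⟨hqN, h4⟩
            · rintro ⟨hqN, h2⟩
              refine ⟨Or.inr ⟨hqN, ?_, ?_, ?_⟩, h2⟩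
              · rintro rfl; exact hvp h2.symm
              · rintro rfl; exact hva h2.symm
              · rintro rfl; exact hvb h2.symm)
          have ho : M.outDeg v = N.outDeg v := outDeg_congr (fun q => by
            rw [hchar]
            constructor
            · rintro ⟨rfl | ⟨hqN, h1, h2, h3⟩, h4⟩
              · exact absurd h4 (Ne.symm hvg)
              · exact ⟨hqN, h4⟩
            · rintro ⟨hqN, h2⟩
              refine ⟨Or.inr ⟨hqN, ?_, ?_, ?_⟩, h2⟩
              · rintro rfl; exact hvg h2.symm
              · rintro rfl; exact hvp h2.symm
              · rintro rfl; exact hvp h2.symm)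
          rw [hi, ho]
          exact hG.2 v hvN

lemma stepD_ret {N M : DNet} {a b : ℕ} (hG : GoodD N) (hs : RReduceRetCherry N M a b) :
    GoodD M ∧ M.verts.card + 2 = N.verts.card := by
  obtain ⟨⟨hab, haL, hbL, -⟩, pa, pb, qa, qb, hpaa, hpbb, hret, hpbpa, hqapa, hqapb,
    hqbpb, hMv, hMa⟩ := hs
  obtain ⟨haV, haI, haO⟩ := haL
  obtain ⟨hbV, hbI, hbO⟩ := hbL
  obtain ⟨hpaV, hpaI, hpaO⟩ := hret
  have hpbV : pb ∈ N.verts := (hG.1 _ hpbpa).1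
  have hqaV : qa ∈ N.verts := (hG.1 _ hqapa).1
  have hqbV : qb ∈ N.verts := (hG.1 _ hqbpb).1
  have hpbpa' : pb ≠ pa := (hG.1 _ hpbpa).2.2
  have hqapa' : qa ≠ pa := (hG.1 _ hqapa).2.2
  have hqbpb' : qb ≠ pb := (hG.1 _ hqbpb).2.2
  have hpaa' : pa ≠ a := (hG.1 _ hpaa).2.2
  have hpbb' : pb ≠ b := (hG.1 _ hpbb).2.2
  have hfsta := fst_all0 haO
  have hfstb := fst_all0 hbO
  have hpab : pa ≠ b := hfstb _ hpaa
  have hpba : pb ≠ a := hfsta _ hpbb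
  have hqaa : qa ≠ a := hfsta _ hqapa
  have hqab : qa ≠ b := hfstb _ hqapa
  have hqba : qb ≠ a := hfsta _ hqbpb
  have hqbb : qb ≠ b := hfstb _ hqbpb
  have hbpa : b ≠ pa := fun h => hpab h.symm
  have houtpb : N.outDeg pb = 2 := by
    have h2 := two_le_outDeg hpbb hpbpa (fun h => hbpa h)
    have h1 := one_le_inDeg hqbpb
    rcases hG.2 pb hpbV with ⟨h, h'⟩ | ⟨h, h'⟩ | ⟨h, h'⟩ | ⟨h, h'⟩ | ⟨h, h'⟩ <;> omega
  have hinpb : N.inDeg pb = 1 := by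
    have h2 := two_le_outDeg hpbb hpbpa (fun h => hbpa h)
    have h1 := one_le_inDeg hqbpb
    rcases hG.2 pb hpbV with ⟨h, h'⟩ | ⟨h, h'⟩ | ⟨h, h'⟩ | ⟨h, h'⟩ | ⟨h, h'⟩ <;> omega
  have hfstpa := fst_all1 hpaO hpaa
  have hsndpa := snd_all2 hpaI hpbpa hqapa (Ne.symm hqapb)
  have hfstpb := fst_all2 houtpb hpbb hpbpa hbpa
  have hsndpb := snd_all1 hinpb hqbpb
  have hsnda := snd_all1 haI hpaa
  have hsndb := snd_all1 hbI hpbb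
  have hqbpa : qb ≠ pa := by
    intro h
    subst h
    have := hfstpa _ hqbpb rfl
    simp at this
    exact hpba this
  have hqaaN : (qa, a) ∉ N.arcs := fun h => hqapa' (by simpa using hsnda _ h rfl)
  have hqbbN : (qb, b) ∉ N.arcs := fun h => hqbpb' (by simpa using hsndb _ h rfl)
  have hvc : (N.verts \ {pa, pb}).card + 2 = N.verts.card := by
    have hsub : ({pa, pb} : Finset ℕ) ⊆ N.verts := by
      intro x hx; simp at hx; rcases hx with rfl | rfl <;> assumption
    have hle := Finset.card_le_card hsub
    rw [Finset.card_sdiff_of_subset hsub, Finset.card_pair (Ne.symm hpbpa')]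
    rw [Finset.card_pair (Ne.symm hpbpa')] at hle
    omega
  have hchar : ∀ q, q ∈ M.arcs ↔ q = (qa, a) ∨ q = (qb, b) ∨
      (q ∈ N.arcs ∧ q.1 ≠ pa ∧ q.1 ≠ pb ∧ q.2 ≠ pa ∧ q.2 ≠ pb) := by
    intro q
    rw [hMa]
    simp only [Finset.mem_insert, Finset.mem_sdiff, Finset.mem_singleton]
    constructor
    · rintro (rfl | rfl | ⟨hqN, hnd⟩)
      · exact Or.inl rfl
      · exact Or.inr (Or.inl rfl)
      · push_neg at hnd
        obtain ⟨h1, h2, h3, h4, h5⟩ := hnd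
        refine Or.inr (Or.inr ⟨hqN, ?_, ?_, ?_, ?_⟩)
        · intro h; exact h2 (hfstpa q hqN h)
        · intro h
          rcases hfstpb q hqN h with h' | h'
          · exact h4 h'
          · exact h1 h'
        · intro h
          rcases hsndpa q hqN h with h' | h'
          · exact h1 h'
          · exact h3 h'
        · intro h; exact h5 (hsndpb q hqN h)
    · rintro (rfl | rfl | ⟨hqN, h1, h2, h3, h4⟩)
      · exact Or.inl rfl
      · exact Or.inr (Or.inl rfl)
      · refine Or.inr (Or.inr ⟨hqN, ?_⟩)
        push_neg
        refine ⟨?_, ?_, ?_, ?_, ?_⟩ <;> rintro rfl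
        · exact h3 rfl
        · exact h1 rfl
        · exact h3 rfl
        · exact h2 rfl
        · exact h4 rfl
  refine ⟨⟨?_, ?_⟩, by rw [hMv]; exact hvc⟩
  · intro q hq
    rw [hMv]
    simp only [Finset.mem_sdiff, Finset.mem_insert, Finset.mem_singleton]
    rcases (hchar q).1 hq with rfl | rfl | ⟨hqN, h1, h2, h3, h4⟩
    · exact ⟨⟨hqaV, by tauto⟩, ⟨haV, by
        push_neg
        exact ⟨Ne.symm hpaa', fun h => hpba h.symm⟩⟩, hqaa⟩
    · exact ⟨⟨hqbV, by tauto⟩, ⟨hbV, by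
        push_neg
        exact ⟨hbpa, Ne.symm hpbb'⟩⟩, hqbb⟩
    · obtain ⟨e1, e2, e3⟩ := hG.1 q hqN
      exact ⟨⟨e1, by tauto⟩, ⟨e2, by tauto⟩, e3⟩
  · intro v hv
    rw [hMv] at hv
    simp only [Finset.mem_sdiff, Finset.mem_insert, Finset.mem_singleton] at hv
    obtain ⟨hvN, hv'⟩ := hv
    have hvpa : v ≠ pa := fun h => hv' (Or.inl h)
    have hvpb : v ≠ pb := fun h => hv' (Or.inr h)
    by_cases hva : v = a
    · subst hva
      right; right; left
      constructor
      · rw [DNet.inDeg]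
        have : M.arcs.filter (fun q => q.2 = v) = {(qa, v)} := by
          ext q
          simp only [Finset.mem_filter, Finset.mem_singleton]
          constructor
          · rintro ⟨hq, hq2⟩
            rcases (hchar q).1 hq with rfl | rfl | ⟨hqN, h1, h2, h3, h4⟩
            · rfl
            · exact absurd hq2.symm hab
            · exact absurd (congrArg Prod.fst (hsnda q hqN hq2)) h1
          · rintro rfl
            exact ⟨(hchar _).2 (Or.inl rfl), rfl⟩
        rw [this, Finset.card_singleton]
      · rw [DNet.outDeg, Finset.card_eq_zero, Finset.eq_empty_iff_forall_notMem]
        intro q hq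
        simp only [Finset.mem_filter] at hq
        obtain ⟨hq, hq1⟩ := hq
        rcases (hchar q).1 hq with rfl | rfl | ⟨hqN, h1, h2, h3, h4⟩
        · exact hqaa hq1
        · exact hqba hq1
        · exact hfsta q hqN hq1
    · by_cases hvb : v = b
      · subst hvb
        right; right; left
        constructor
        · rw [DNet.inDeg]
          have : M.arcs.filter (fun q => q.2 = v) = {(qb, v)} := by
            ext q
            simp only [Finset.mem_filter, Finset.mem_singleton]
            constructor
            · rintro ⟨hq, hq2⟩
              rcases (hchar q).1 hq with rfl | rfl | ⟨hqN, h1, h2, h3, h4⟩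
              · exact absurd hq2 hab
              · rfl
              · exact absurd (congrArg Prod.fst (hsndb q hqN hq2)) h2
            · rintro rfl
              exact ⟨(hchar _).2 (Or.inr (Or.inl rfl)), rfl⟩
          rw [this, Finset.card_singleton]
        · rw [DNet.outDeg, Finset.card_eq_zero, Finset.eq_empty_iff_forall_notMem]
          intro q hq
          simp only [Finset.mem_filter] at hq
          obtain ⟨hq, hq1⟩ := hq
          rcases (hchar q).1 hq with rfl | rfl | ⟨hqN, h1, h2, h3, h4⟩
          · exact hqab hq1
          · exact hqbb hq1
          · exact hfstb q hqN hq1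
      · -- v ∉ {a, b, pa, pb}
        have hicongr : M.inDeg v = N.inDeg v := inDeg_congr (fun q => by
          constructor
          · rintro ⟨hq, hq2⟩
            rcases (hchar q).1 hq with rfl | rfl | ⟨hqN, h1, h2, h3, h4⟩
            · exact absurd hq2.symm hva
            · exact absurd hq2.symm hvb
            · exact ⟨hqN, hq2⟩
          · rintro ⟨hqN, hq2⟩
            refine ⟨(hchar q).2 (Or.inr (Or.inr ⟨hqN, ?_, ?_, ?_, ?_⟩)), hq2⟩
            · intro h
              have := hsnda q hqN (by rw [hfstpa q hqN h]) 
              exact hva ((hfstpa q hqN h ▸ hq2 : ((pa : ℕ), a).2 = v)).symm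
            · intro h
              rcases hfstpb q hqN h with h' | h'
              · exact hvb (h' ▸ hq2 : ((pb : ℕ), b).2 = v).symm
              · exact hvpa (h' ▸ hq2 : ((pb : ℕ), pa).2 = v).symm
            · intro h; exact hvpa (hq2 ▸ h : v = pa)
            · intro h; exact hvpb (hq2 ▸ h : v = pb))
        have hclass := hG.2 v hvN
        -- outDeg analysis
        by_cases hvqa : v = qa
        · subst hvqa
          by_cases hvqb : v = qb
          · subst hvqb
            have ho : M.outDeg v = N.outDeg v := by
              rw [DNet.outDeg]
              have hfe : M.arcs.filter (fun q => q.1 = v) =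
                  insert (v, a) (insert (v, b)
                    ((N.arcs.filter (fun q => q.1 = v)) \ {(v, pa), (v, pb)})) := by
                ext q
                simp only [Finset.mem_filter, Finset.mem_insert, Finset.mem_sdiff,
                  Finset.mem_singleton]
                constructor
                · rintro ⟨hq, hq1⟩
                  rcases (hchar q).1 hq with rfl | rfl | ⟨hqN, h1, h2, h3, h4⟩
                  · exact Or.inl rfl
                  · exact Or.inr (Or.inl rfl)
                  · refine Or.inr (Or.inr ⟨⟨hqN, hq1⟩, ?_⟩)
                    rintro (rfl | rfl)
                    · exact h3 rfl
                    · exact h4 rfl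
                · rintro (rfl | rfl | ⟨⟨hqN, hq1⟩, hne⟩)
                  · exact ⟨(hchar _).2 (Or.inl rfl), rfl⟩
                  · exact ⟨(hchar _).2 (Or.inr (Or.inl rfl)), rfl⟩
                  · refine ⟨(hchar q).2 (Or.inr (Or.inr ⟨hqN, ?_, ?_, ?_, ?_⟩)), hq1⟩
                    · intro h; exact hvpa (hq1 ▸ h : v = pa)
                    · intro h; exact hvpb (hq1 ▸ h : v = pb)
                    · intro h
                      rcases hsndpa q hqN h with h' | h'
                      · exact hvpb (h' ▸ hq1 : ((pb : ℕ), pa).1 = v).symm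
                      · exact hne (by rw [h']; exact Or.inl rfl)
                    · intro h
                      have h' := hsndpb q hqN h
                      exact hne (by rw [h']; exact Or.inr rfl)
              rw [hfe]
              exact card_ins_sdiff2
                (fun h => hqaaN (Finset.mem_filter.mp h).1)
                (fun h => hqbbN (Finset.mem_filter.mp h).1)
                (by simp [hab])
                (Finset.mem_filter.mpr ⟨hqapa, rfl⟩)
                (Finset.mem_filter.mpr ⟨hqbpb, rfl⟩)
                (by simp [Ne.symm hpbpa'])
            rw [hicongr, ho]
            exact hclass
          · have ho : M.outDeg v = N.outDeg v := by
              rw [DNet.outDeg]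
              have hfe : M.arcs.filter (fun q => q.1 = v) =
                  insert (v, a) ((N.arcs.filter (fun q => q.1 = v)) \ {(v, pa)}) := by
                ext q
                simp only [Finset.mem_filter, Finset.mem_insert, Finset.mem_sdiff,
                  Finset.mem_singleton]
                constructor
                · rintro ⟨hq, hq1⟩
                  rcases (hchar q).1 hq with rfl | rfl | ⟨hqN, h1, h2, h3, h4⟩
                  · exact Or.inl rfl
                  · exact absurd hq1 (Ne.symm hvqb)
                  · refine Or.inr ⟨⟨hqN, hq1⟩, ?_⟩
                    rintro rfl
                    exact h3 rfl
                · rintro (rfl | ⟨⟨hqN, hq1⟩, hne⟩)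
                  · exact ⟨(hchar _).2 (Or.inl rfl), rfl⟩
                  · refine ⟨(hchar q).2 (Or.inr (Or.inr ⟨hqN, ?_, ?_, ?_, ?_⟩)), hq1⟩
                    · intro h; exact hvpa (hq1 ▸ h : v = pa)
                    · intro h; exact hvpb (hq1 ▸ h : v = pb)
                    · intro h
                      rcases hsndpa q hqN h with h' | h'
                      · exact hvpb (h' ▸ hq1 : ((pb : ℕ), pa).1 = v).symm
                      · exact hne (by rw [h'])
                    · intro h
                      have h' := hsndpb q hqN h
                      exact hvqb (h' ▸ hq1 : ((qb : ℕ), pb).1 = v).symm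
              rw [hfe]
              exact card_ins_sdiff1
                (fun h => hqaaN (Finset.mem_filter.mp h).1)
                (Finset.mem_filter.mpr ⟨hqapa, rfl⟩)
            rw [hicongr, ho]
            exact hclass
        · by_cases hvqb : v = qb
          · subst hvqb
            have ho : M.outDeg v = N.outDeg v := by
              rw [DNet.outDeg]
              have hfe : M.arcs.filter (fun q => q.1 = v) =
                  insert (v, b) ((N.arcs.filter (fun q => q.1 = v)) \ {(v, pb)}) := by
                ext q
                simp only [Finset.mem_filter, Finset.mem_insert, Finset.mem_sdiff,
                  Finset.mem_singleton]
                constructor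
                · rintro ⟨hq, hq1⟩
                  rcases (hchar q).1 hq with rfl | rfl | ⟨hqN, h1, h2, h3, h4⟩
                  · exact absurd hq1 (Ne.symm hvqa)
                  · exact Or.inl rfl
                  · refine Or.inr ⟨⟨hqN, hq1⟩, ?_⟩
                    rintro rfl
                    exact h4 rfl
                · rintro (rfl | ⟨⟨hqN, hq1⟩, hne⟩)
                  · exact ⟨(hchar _).2 (Or.inr (Or.inl rfl)), rfl⟩
                  · refine ⟨(hchar q).2 (Or.inr (Or.inr ⟨hqN, ?_, ?_, ?_, ?_⟩)), hq1⟩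
                    · intro h; exact hvpa (hq1 ▸ h : v = pa)
                    · intro h; exact hvpb (hq1 ▸ h : v = pb)
                    · intro h
                      rcases hsndpa q hqN h with h' | h'
                      · exact hvpb (h' ▸ hq1 : ((pb : ℕ), pa).1 = v).symm
                      · exact hvqa (h' ▸ hq1 : ((qa : ℕ), pa).1 = v).symm
                    · intro h
                      have h' := hsndpb q hqN h
                      exact hne (by rw [h'])
              rw [hfe]
              exact card_ins_sdiff1
                (fun h => hqbbN (Finset.mem_filter.mp h).1)
                (Finset.mem_filter.mpr ⟨hqbpb, rfl⟩)
            rw [hicongr, ho]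
            exact hclass
          · have ho : M.outDeg v = N.outDeg v := outDeg_congr (fun q => by
              constructor
              · rintro ⟨hq, hq1⟩
                rcases (hchar q).1 hq with rfl | rfl | ⟨hqN, h1, h2, h3, h4⟩
                · exact absurd hq1 (Ne.symm hvqa)
                · exact absurd hq1 (Ne.symm hvqb)
                · exact ⟨hqN, hq1⟩
              · rintro ⟨hqN, hq1⟩
                refine ⟨(hchar q).2 (Or.inr (Or.inr ⟨hqN, ?_, ?_, ?_, ?_⟩)), hq1⟩
                · intro h; exact hvpa (hq1 ▸ h : v = pa)
                · intro h; exact hvpb (hq1 ▸ h : v = pb)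
                · intro h
                  rcases hsndpa q hqN h with h' | h'
                  · exact hvpb (h' ▸ hq1 : ((pb : ℕ), pa).1 = v).symm
                  · exact hvqa (h' ▸ hq1 : ((qa : ℕ), pa).1 = v).symm
                · intro h
                  have h' := hsndpb q hqN h
                  exact hvqb (h' ▸ hq1 : ((qb : ℕ), pb).1 = v).symm)
            rw [hicongr, ho]
            exact hclass

lemma initD {N : DNet} {X : Finset ℕ} (h : IsRootedBinaryNet N X) :
    GoodD N ∧ N.verts.card + 1 = 2 * (X.card + N.retNum) := by
  rcases h with ⟨x, hX, hV, hA⟩ | ⟨hend, hloop, hacyc, hroot, hclass, hleaf⟩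
  · have hdeg : ∀ v, N.inDeg v = 0 ∧ N.outDeg v = 0 := by
      intro v
      constructor <;> simp [DNet.inDeg, DNet.outDeg, hA]
    refine ⟨⟨?_, ?_⟩, ?_⟩
    · intro p hp; rw [hA] at hp; simp at hp
    · intro v hv; exact Or.inl (hdeg v)
    · have : N.retNum = 0 := by
        rw [DNet.retNum, Finset.card_eq_zero, Finset.eq_empty_iff_forall_notMem]
        intro v hv
        simp only [Finset.mem_filter] at hv
        have := (hdeg v).1
        omega
      rw [this, hX, hV]
      simp
  · have hcl : ∀ v ∈ N.verts,
        (N.inDeg v = 0 ∧ N.outDeg v = 2) ∨ (N.inDeg v = 1 ∧ N.outDeg v = 0) ∨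
        (N.inDeg v = 1 ∧ N.outDeg v = 2) ∨ (N.inDeg v = 2 ∧ N.outDeg v = 1) := by
      intro v hv
      rcases hclass v hv with h | h | h | h
      · exact Or.inl ⟨h.2.1, h.2.2⟩
      · exact Or.inr (Or.inl ⟨h.2.1, h.2.2⟩)
      · exact Or.inr (Or.inr (Or.inl ⟨h.2.1, h.2.2⟩))
      · exact Or.inr (Or.inr (Or.inr ⟨h.2.1, h.2.2⟩))
    have hGood : GoodD N := by
      refine ⟨fun p hp => ⟨(hend p hp).1, (hend p hp).2, hloop p hp⟩, fun v hv => ?_⟩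
      rcases hcl v hv with h | h | h | h
      · exact Or.inr (Or.inl h)
      · exact Or.inr (Or.inr (Or.inl h))
      · exact Or.inr (Or.inr (Or.inr (Or.inl h)))
      · exact Or.inr (Or.inr (Or.inr (Or.inr h)))
    refine ⟨hGood, ?_⟩
    obtain ⟨ρ, ⟨hρV, hρI⟩, hρu⟩ := hroot
    set A := N.verts.filter (fun v => N.inDeg v = 0) with hAdef
    set B := N.verts.filter (fun v => N.inDeg v = 1 ∧ N.outDeg v = 0) with hBdef
    set C := N.verts.filter (fun v => N.inDeg v = 1 ∧ N.outDeg v = 2) with hCdef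
    set D := N.verts.filter (fun v => N.inDeg v = 2) with hDdef
    have hAs : A = {ρ} := by
      ext v
      simp only [hAdef, Finset.mem_filter, Finset.mem_singleton]
      constructor
      · rintro ⟨hv, h0⟩; exact hρu v ⟨hv, h0⟩
      · rintro rfl; exact ⟨hρV, hρI⟩
    have hpart : N.verts = A ∪ B ∪ C ∪ D := by
      ext v
      simp only [Finset.mem_union, hAdef, hBdef, hCdef, hDdef, Finset.mem_filter]
      constructor
      · intro hv
        rcases hcl v hv with h | h | h | h
        · exact Or.inl (Or.inl (Or.inl ⟨hv, h.1⟩))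
        · exact Or.inl (Or.inl (Or.inr ⟨hv, h⟩))
        · exact Or.inl (Or.inr ⟨hv, h⟩)
        · exact Or.inr ⟨hv, h.1⟩
      · rintro ((((⟨hv, -⟩ | ⟨hv, -⟩) | ⟨hv, -⟩) | ⟨hv, -⟩)) <;> exact hv
    have hdAB : Disjoint A B := by
      rw [Finset.disjoint_left]
      intro x hx hx'
      simp only [hAdef, hBdef, Finset.mem_filter] at hx hx'
      omega
    have hdABC : Disjoint (A ∪ B) C := by
      rw [Finset.disjoint_left]
      intro x hx hx'
      simp only [Finset.mem_union, hAdef, hBdef, hCdef, Finset.mem_filter] at hx hx'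
      rcases hx with h | h <;> omega
    have hdABCD : Disjoint (A ∪ B ∪ C) D := by
      rw [Finset.disjoint_left]
      intro x hx hx'
      simp only [Finset.mem_union, hAdef, hBdef, hCdef, hDdef, Finset.mem_filter] at hx hx'
      rcases hx with (h | h) | h <;> omega
    have houtA : ∀ v ∈ A, N.outDeg v = 2 := by
      intro v hv
      simp only [hAdef, Finset.mem_filter] at hv
      rcases hcl v hv.1 with h | h | h | h <;> omega
    have houtD : ∀ v ∈ D, N.outDeg v = 1 := by
      intro v hv
      simp only [hDdef, Finset.mem_filter] at hv
      rcases hcl v hv.1 with h | h | h | h <;> omega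
    have hin : N.arcs.card = ∑ v ∈ N.verts, N.inDeg v := by
      have := Finset.card_eq_sum_card_fiberwise (f := fun p : ℕ × ℕ => p.2) (s := N.arcs)
        (t := N.verts) (fun p hp => (hend p hp).2)
      simpa [DNet.inDeg] using this
    have hout : N.arcs.card = ∑ v ∈ N.verts, N.outDeg v := by
      have := Finset.card_eq_sum_card_fiberwise (f := fun p : ℕ × ℕ => p.1) (s := N.arcs)
        (t := N.verts) (fun p hp => (hend p hp).1)
      simpa [DNet.outDeg] using this
    have hsum : ∀ f : ℕ → ℕ, ∑ v ∈ N.verts, f v =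
        ∑ v ∈ A, f v + ∑ v ∈ B, f v + ∑ v ∈ C, f v + ∑ v ∈ D, f v := by
      intro f
      rw [hpart, Finset.sum_union hdABCD, Finset.sum_union hdABC, Finset.sum_union hdAB]
    have hsum_const : ∀ (s : Finset ℕ) (f : ℕ → ℕ) (c : ℕ), (∀ v ∈ s, f v = c) →
        ∑ v ∈ s, f v = s.card * c := by
      intro s f c hc
      rw [Finset.sum_congr rfl hc, Finset.sum_const, smul_eq_mul]
    have hinA : ∑ v ∈ A, N.inDeg v = A.card * 0 :=
      hsum_const _ _ _ (fun v hv => by simp only [hAdef, Finset.mem_filter] at hv; omega)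
    have hinB : ∑ v ∈ B, N.inDeg v = B.card * 1 :=
      hsum_const _ _ _ (fun v hv => by simp only [hBdef, Finset.mem_filter] at hv; omega)
    have hinC : ∑ v ∈ C, N.inDeg v = C.card * 1 :=
      hsum_const _ _ _ (fun v hv => by simp only [hCdef, Finset.mem_filter] at hv; omega)
    have hinD : ∑ v ∈ D, N.inDeg v = D.card * 2 :=
      hsum_const _ _ _ (fun v hv => by simp only [hDdef, Finset.mem_filter] at hv; omega)
    have houtA' : ∑ v ∈ A, N.outDeg v = A.card * 2 := hsum_const _ _ _ houtA
    have houtB : ∑ v ∈ B, N.outDeg v = B.card * 0 :=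
      hsum_const _ _ _ (fun v hv => by simp only [hBdef, Finset.mem_filter] at hv; omega)
    have houtC : ∑ v ∈ C, N.outDeg v = C.card * 2 :=
      hsum_const _ _ _ (fun v hv => by simp only [hCdef, Finset.mem_filter] at hv; omega)
    have houtD' : ∑ v ∈ D, N.outDeg v = D.card * 1 := hsum_const _ _ _ houtD
    have hcardA : A.card = 1 := by rw [hAs, Finset.card_singleton]
    have hXB : X = B := by
      ext v
      rw [← hleaf v]
      simp only [hBdef, Finset.mem_filter, DNet.IsLeaf]
    have hret : N.retNum = D.card := rfl
    have hvcard : N.verts.card = A.card + B.card + C.card + D.card := by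
      rw [hpart, Finset.card_union_of_disjoint hdABCD, Finset.card_union_of_disjoint hdABC,
        Finset.card_union_of_disjoint hdAB]
    have heq1 : N.arcs.card = A.card * 0 + B.card * 1 + C.card * 1 + D.card * 2 := by
      rw [hin, hsum, hinA, hinB, hinC, hinD]
    have heq2 : N.arcs.card = A.card * 2 + B.card * 0 + C.card * 2 + D.card * 1 := by
      rw [hout, hsum, houtA', houtB, houtC, houtD']
    rw [hXB, hret, hvcard]
    omega

lemma rootedMain (Ns : ℕ → DNet) (X : Finset ℕ) (k : ℕ)
    (h0 : IsRootedBinaryNet (Ns 0) X) (hseq : RReductionSeq Ns k)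
    (hk : (Ns k).SingleVertex) : k = X.card + (Ns 0).retNum - 1 := by
  obtain ⟨hGood0, hcount⟩ := initD h0
  have hind : ∀ i, i ≤ k → GoodD (Ns i) ∧ (Ns i).verts.card + 2 * i = (Ns 0).verts.card := by
    intro i
    induction i with
    | zero => exact fun _ => ⟨hGood0, by omega⟩
    | succ n ih =>
      intro hle
      obtain ⟨hg, hc⟩ := ih (by omega)
      obtain ⟨r, hr⟩ := hseq n (by omega)
      have hstep : GoodD (Ns (n + 1)) ∧ (Ns (n + 1)).verts.card + 2 = (Ns n).verts.card := by
        cases r with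
        | cherry x y => exact stepD_cherry hg hr
        | ret x y => exact stepD_ret hg hr
      exact ⟨hstep.1, by omega⟩
  obtain ⟨-, hck⟩ := hind k le_rfl
  have h1 : (Ns k).verts.card = 1 := hk.1
  omega

/-! ### Unrooted helpers -/

lemma udeg_filter (U : UNet) (v : ℕ) : U.deg v = (U.edges.filter (fun e => v ∈ e)).card := rfl

lemma uall1 {U : UNet} {v : ℕ} {e0 : Sym2 ℕ} (h : U.deg v = 1) (he : e0 ∈ U.edges)
    (hv : v ∈ e0) : ∀ e ∈ U.edges, v ∈ e → e = e0 := by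
  intro e heU hve
  have h' : (U.edges.filter (fun e => v ∈ e)).card = 1 := h
  have hf := fin1 h' (Finset.mem_filter.mpr ⟨he, hv⟩)
  have : e ∈ U.edges.filter (fun e => v ∈ e) := Finset.mem_filter.mpr ⟨heU, hve⟩
  rw [hf] at this; simpa using this

lemma uall3 {U : UNet} {v : ℕ} {e1 e2 e3 : Sym2 ℕ} (h : U.deg v = 3)
    (h1 : e1 ∈ U.edges) (h2 : e2 ∈ U.edges) (h3 : e3 ∈ U.edges)
    (hv1 : v ∈ e1) (hv2 : v ∈ e2) (hv3 : v ∈ e3)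
    (h12 : e1 ≠ e2) (h13 : e1 ≠ e3) (h23 : e2 ≠ e3) :
    ∀ e ∈ U.edges, v ∈ e → e = e1 ∨ e = e2 ∨ e = e3 := by
  intro e heU hve
  have h' : (U.edges.filter (fun e => v ∈ e)).card = 3 := h
  have hf := fin3 h' (Finset.mem_filter.mpr ⟨h1, hv1⟩) (Finset.mem_filter.mpr ⟨h2, hv2⟩)
    (Finset.mem_filter.mpr ⟨h3, hv3⟩) h12 h13 h23
  have : e ∈ U.edges.filter (fun e => v ∈ e) := Finset.mem_filter.mpr ⟨heU, hve⟩
  rw [hf] at this; simpa using this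

lemma three_le_udeg {U : UNet} {v : ℕ} {e1 e2 e3 : Sym2 ℕ}
    (h1 : e1 ∈ U.edges) (h2 : e2 ∈ U.edges) (h3 : e3 ∈ U.edges)
    (hv1 : v ∈ e1) (hv2 : v ∈ e2) (hv3 : v ∈ e3)
    (h12 : e1 ≠ e2) (h13 : e1 ≠ e3) (h23 : e2 ≠ e3) : 3 ≤ U.deg v := by
  have hsub : ({e1, e2, e3} : Finset (Sym2 ℕ)) ⊆ U.edges.filter (fun e => v ∈ e) := by
    intro e he
    simp only [Finset.mem_insert, Finset.mem_singleton] at he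
    rcases he with rfl | rfl | rfl <;> exact Finset.mem_filter.mpr ⟨by assumption, by assumption⟩
  calc 3 = ({e1, e2, e3} : Finset (Sym2 ℕ)).card := by
        rw [Finset.card_insert_of_notMem (by simp [h12, h13]),
          Finset.card_insert_of_notMem (by simp [h23]), Finset.card_singleton]
    _ ≤ _ := Finset.card_le_card hsub

lemma udeg_congr {W U : UNet} {v : ℕ}
    (h : ∀ e, (e ∈ W.edges ∧ v ∈ e) ↔ (e ∈ U.edges ∧ v ∈ e)) : W.deg v = U.deg v := by
  unfold UNet.deg
  congr 1
  ext e
  simp only [Finset.mem_filter]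
  exact h e

/-- Invariant preserved along unrooted reduction sequences. -/
def GoodU (U : UNet) : Prop :=
  (∀ e ∈ U.edges, ¬ e.IsDiag ∧ ∀ v ∈ e, v ∈ U.verts) ∧
  (∀ v ∈ U.verts, U.deg v = 1 ∨ U.deg v = 3)

/-- The potential function for unrooted sequences. -/
def phiU (U : UNet) : ℕ := U.verts.card + (if U.edges = ∅ then 0 else 1)

lemma noStepU {U W : UNet} {r : Pick} (hE : U.edges = ∅) (hs : UStep U W r) : False := by
  have hnl : ∀ z, ¬ U.IsLeaf z := by
    intro z hz
    have h1 := hz.2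
    rw [UNet.deg, hE] at h1
    simp at h1
  cases r with
  | cherry x y => exact hnl x hs.1.2.1
  | ret x y => exact hnl x hs.1.2.1

lemma stepU_cherry {U W : UNet} {a b : ℕ} (hG : GoodU U) (hs : UReduceCherry U W a b) :
    (GoodU W ∨ W.edges = ∅) ∧ phiU W + 2 = phiU U ∧
    ((W.edges.card : ℤ) - W.verts.card ≤ (U.edges.card : ℤ) - U.verts.card) := by
  obtain ⟨⟨hab, haL, hbL, -⟩, hcase⟩ := hs
  obtain ⟨haV, haI⟩ := haL
  obtain ⟨hbV, hbI⟩ := hbL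
  rcases hcase with ⟨hE, hWv, hWe⟩ | ⟨p, g, hap, hbp, hpg, hpa, hpb, hga, hgb, hgp, hWv, hWe⟩
  · -- base case
    have hV1 : 1 ≤ U.verts.card := Finset.card_pos.mpr ⟨a, haV⟩
    have hWvc : W.verts.card = U.verts.card - 1 := by
      rw [hWv, Finset.card_sdiff_of_subset (by simpa using haV), Finset.card_singleton]
    have hEne : U.edges ≠ ∅ := by rw [hE]; simp
    have hEc : U.edges.card = 1 := by rw [hE]; exact Finset.card_singleton _
    refine ⟨Or.inr hWe, ?_, ?_⟩
    · rw [phiU, phiU, if_pos hWe, if_neg hEne]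
      omega
    · rw [hWe, hWvc, hEc]
      simp only [Finset.card_empty]
      omega
  · -- non-base case
    have hpV : p ∈ U.verts := (hG.1 _ hpg).2 p (by simp)
    have hgV : g ∈ U.verts := (hG.1 _ hpg).2 g (by simp)
    have haE := uall1 haI hap (by simp)
    have hbE := uall1 hbI hbp (by simp)
    have h12 : s(a, p) ≠ s(b, p) := by
      intro heq
      rw [Sym2.eq_iff] at heq
      rcases heq with ⟨h, -⟩ | ⟨h, -⟩
      · exact hab h
      · exact hpa h.symm
    have h13 : s(a, p) ≠ s(p, g) := by
      intro heq
      rw [Sym2.eq_iff] at heq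
      rcases heq with ⟨h, -⟩ | ⟨h, -⟩
      · exact hpa h.symm
      · exact hga h.symm
    have h23 : s(b, p) ≠ s(p, g) := by
      intro heq
      rw [Sym2.eq_iff] at heq
      rcases heq with ⟨h, -⟩ | ⟨h, -⟩
      · exact hpb h.symm
      · exact hgb h.symm
    have hdegp : U.deg p = 3 := by
      have h3 := three_le_udeg (v := p) hap hbp hpg (by simp) (by simp) (by simp) h12 h13 h23
      rcases hG.2 p hpV with h | h <;> omega
    have hpE := uall3 hdegp hap hbp hpg (by simp) (by simp) (by simp) h12 h13 h23
    have hbgE : s(b, g) ∉ U.edges := by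
      intro h
      have h' := hbE _ h (by simp)
      rw [Sym2.eq_iff] at h'
      rcases h' with ⟨-, h'⟩ | ⟨h', -⟩
      · exact hgp h'
      · exact hpb h'.symm
    have hchar : ∀ e, e ∈ W.edges ↔ e = s(b, g) ∨ (e ∈ U.edges ∧ p ∉ e ∧ a ∉ e) := by
      intro e
      rw [hWe]
      simp only [Finset.mem_insert, Finset.mem_sdiff, Finset.mem_singleton]
      constructor
      · rintro (rfl | ⟨heU, hnd⟩)
        · exact Or.inl rfl
        · push_neg at hnd
          obtain ⟨h1, h2, h3⟩ := hnd
          refine Or.inr ⟨heU, ?_, ?_⟩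
          · intro hp
            rcases hpE e heU hp with rfl | rfl | rfl
            · exact h1 rfl
            · exact h2 rfl
            · exact h3 rfl
          · intro ha
            exact h1 (haE e heU ha)
      · rintro (rfl | ⟨heU, h1, h2⟩)
        · exact Or.inl rfl
        · refine Or.inr ⟨heU, ?_⟩
          push_neg
          refine ⟨?_, ?_, ?_⟩ <;> rintro rfl
          · exact h2 (by simp)
          · exact h1 (by simp)
          · exact h1 (by simp)
    have hapne : a ≠ p := fun h => hpa h.symm
    have hvsub : ({a, p} : Finset ℕ) ⊆ U.verts := by
      intro x hx; simp at hx; rcases hx with rfl | rfl <;> assumption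
    have hV2 : 2 ≤ U.verts.card := by
      calc 2 = ({a, p} : Finset ℕ).card := (Finset.card_pair hapne).symm
      _ ≤ _ := Finset.card_le_card hvsub
    have hWvc : W.verts.card = U.verts.card - 2 := by
      rw [hWv, Finset.card_sdiff_of_subset hvsub, Finset.card_pair hapne]
    have hDsub : ({s(a, p), s(b, p), s(p, g)} : Finset (Sym2 ℕ)) ⊆ U.edges := by
      intro e he; simp only [Finset.mem_insert, Finset.mem_singleton] at he
      rcases he with rfl | rfl | rfl <;> assumption
    have hDc : ({s(a, p), s(b, p), s(p, g)} : Finset (Sym2 ℕ)).card = 3 := by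
      rw [Finset.card_insert_of_notMem (by simp [h12, h13]),
        Finset.card_insert_of_notMem (by simp [h23]), Finset.card_singleton]
    have hE3 : 3 ≤ U.edges.card := by
      calc 3 = ({s(a, p), s(b, p), s(p, g)} : Finset (Sym2 ℕ)).card := hDc.symm
      _ ≤ _ := Finset.card_le_card hDsub
    have hWEc : W.edges.card ≤ U.edges.card - 3 + 1 := by
      rw [hWe]
      refine le_trans (Finset.card_insert_le _ _) ?_
      rw [Finset.card_sdiff_of_subset hDsub, hDc]
    have hWEne : W.edges ≠ ∅ := by rw [hWe]; simp
    have hUEne : U.edges ≠ ∅ := fun h => by rw [h] at hap; simp at hap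
    refine ⟨Or.inl ⟨?_, ?_⟩, ?_, ?_⟩
    · intro e he
      rcases (hchar e).1 he with rfl | ⟨heU, h1, h2⟩
      · refine ⟨by rw [Sym2.mk_isDiag_iff]; exact fun h => hgb h.symm, ?_⟩
        intro v hv
        rw [Sym2.mem_iff] at hv
        rw [hWv]
        simp only [Finset.mem_sdiff, Finset.mem_insert, Finset.mem_singleton]
        rcases hv with rfl | rfl
        · exact ⟨hbV, by push_neg; exact ⟨Ne.symm hab, fun h => hpb h.symm⟩⟩
        · exact ⟨hgV, by push_neg; exact ⟨hga, hgp⟩⟩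
      · refine ⟨(hG.1 e heU).1, ?_⟩
        intro v hv
        rw [hWv]
        simp only [Finset.mem_sdiff, Finset.mem_insert, Finset.mem_singleton]
        refine ⟨(hG.1 e heU).2 v hv, ?_⟩
        push_neg
        constructor <;> rintro rfl
        · exact h2 hv
        · exact h1 hv
    · intro v hv
      rw [hWv] at hv
      simp only [Finset.mem_sdiff, Finset.mem_insert, Finset.mem_singleton] at hv
      obtain ⟨hvU, hv'⟩ := hv
      push_neg at hv'
      obtain ⟨hva, hvp⟩ := hv'
      by_cases hvb : v = b
      · subst hvb
        left
        rw [udeg_filter]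
        have hfe : W.edges.filter (fun e => v ∈ e) = {s(v, g)} := by
          ext e
          simp only [Finset.mem_filter, Finset.mem_singleton]
          constructor
          · rintro ⟨he, hve⟩
            rcases (hchar e).1 he with rfl | ⟨heU, h1, h2⟩
            · rfl
            · exact absurd ((hbE e heU hve) ▸ (by simp : p ∈ s(v, p))) h1
          · rintro rfl
            exact ⟨(hchar _).2 (Or.inl rfl), by simp⟩
        rw [hfe, Finset.card_singleton]
      · by_cases hvg : v = g
        · subst hvg
          have hdeq : W.deg v = U.deg v := by
            rw [udeg_filter, udeg_filter]
            have hfe : W.edges.filter (fun e => v ∈ e) =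
                insert s(b, v) ((U.edges.filter (fun e => v ∈ e)) \ {s(p, v)}) := by
              ext e
              simp only [Finset.mem_filter, Finset.mem_insert, Finset.mem_sdiff,
                Finset.mem_singleton]
              constructor
              · rintro ⟨he, hve⟩
                rcases (hchar e).1 he with rfl | ⟨heU, h1, h2⟩
                · exact Or.inl rfl
                · exact Or.inr ⟨⟨heU, hve⟩, fun h => h1 (h ▸ (by simp : p ∈ s(p, v)))⟩
              · rintro (rfl | ⟨⟨heU, hve⟩, hne⟩)
                · exact ⟨(hchar _).2 (Or.inl rfl), by simp⟩
                refine ⟨(hchar e).2 (Or.inr ⟨heU, ?_, ?_⟩), hve⟩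
                · intro hp
                  rcases hpE e heU hp with rfl | rfl | rfl
                  · rw [Sym2.mem_iff] at hve
                    rcases hve with rfl | rfl
                    · exact hga rfl
                    · exact hgp rfl
                  · rw [Sym2.mem_iff] at hve
                    rcases hve with rfl | rfl
                    · exact hvb rfl
                    · exact hgp rfl
                  · exact hne rfl
                · intro ha
                  have := haE e heU ha
                  subst this
                  rw [Sym2.mem_iff] at hve
                  rcases hve with rfl | rfl
                  · exact hva rfl
                  · exact hgp rfl
            rw [hfe]
            exact card_ins_sdiff1
              (fun h => hbgE (Finset.mem_filter.mp h).1)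
              (Finset.mem_filter.mpr ⟨hpg, by simp⟩)
          rw [hdeq]
          exact hG.2 v hvU
        · have hdeq : W.deg v = U.deg v := udeg_congr (fun e => by
            constructor
            · rintro ⟨he, hve⟩
              rcases (hchar e).1 he with rfl | ⟨heU, h1, h2⟩
              · rw [Sym2.mem_iff] at hve
                rcases hve with rfl | rfl
                · exact absurd rfl hvb
                · exact absurd rfl hvg
              · exact ⟨heU, hve⟩
            · rintro ⟨heU, hve⟩
              refine ⟨(hchar e).2 (Or.inr ⟨heU, ?_, ?_⟩), hve⟩
              · intro hp
                rcases hpE e heU hp with rfl | rfl | rfl <;> rw [Sym2.mem_iff] at hve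
                · rcases hve with rfl | rfl
                  · exact hva rfl
                  · exact hvp rfl
                · rcases hve with rfl | rfl
                  · exact hvb rfl
                  · exact hvp rfl
                · rcases hve with rfl | rfl
                  · exact hvp rfl
                  · exact hvg rfl
              · intro ha
                have := haE e heU ha
                subst this
                rw [Sym2.mem_iff] at hve
                rcases hve with rfl | rfl
                · exact hva rfl
                · exact hvp rfl)
          rw [hdeq]
          exact hG.2 v hvU
    · rw [phiU, phiU, if_neg hWEne, if_neg hUEne]
      omega
    · omega

lemma stepU_ret {U W : UNet} {a b : ℕ} (hG : GoodU U) (hs : UReduceRetCherry U W a b) :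
    (GoodU W ∨ W.edges = ∅) ∧ phiU W + 2 = phiU U ∧
    ((W.edges.card : ℤ) - W.verts.card ≤ (U.edges.card : ℤ) - U.verts.card) := by
  obtain ⟨⟨hab, haL, hbL, -⟩, u, v, ga, gb, hau, huv, hvb, huvne, hua, hvbne, -,
    huga, hgaa, hgav, hgau, hvgb, hgbb, hgbu, hgbv, hWv, hWe⟩ := hs
  obtain ⟨haV, haI⟩ := haL
  obtain ⟨hbV, hbI⟩ := hbL
  have haE := uall1 haI hau (by simp)
  have hbE := uall1 hbI hvb (by simp)
  have huV : u ∈ U.verts := (hG.1 _ huv).2 u (by simp)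
  have hvV : v ∈ U.verts := (hG.1 _ huv).2 v (by simp)
  have hgaV : ga ∈ U.verts := (hG.1 _ huga).2 ga (by simp)
  have hgbV : gb ∈ U.verts := (hG.1 _ hvgb).2 gb (by simp)
  have hav : a ≠ v := by
    rintro rfl
    have h' := haE _ hvgb (by simp)
    rw [Sym2.eq_iff] at h'
    rcases h' with ⟨-, h'⟩ | ⟨h', -⟩
    · exact hgbu h'
    · exact hua h'.symm
  have hbu : b ≠ u := by
    rintro rfl
    have h' := hbE _ huga (by simp)
    rw [Sym2.eq_iff] at h'
    rcases h' with ⟨h1, -⟩ | ⟨-, h2⟩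
    · exact hvbne h1.symm
    · exact hgav h2
  have hgab : ga ≠ b := by
    rintro rfl
    have h' := hbE _ huga (by simp)
    rw [Sym2.eq_iff] at h'
    rcases h' with ⟨h1, -⟩ | ⟨-, h2⟩
    · exact huvne h1
    · exact hgav h2
  have hgba : gb ≠ a := by
    rintro rfl
    have h' := haE _ hvgb (by simp)
    rw [Sym2.eq_iff] at h'
    rcases h' with ⟨-, h2⟩ | ⟨h1, -⟩
    · exact hgbu h2
    · exact huvne h1.symm
  have hu1 : s(a, u) ≠ s(u, v) := by
    intro h; rw [Sym2.eq_iff] at h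
    rcases h with ⟨h1, -⟩ | ⟨h1, -⟩
    · exact hua h1.symm
    · exact hav h1
  have hu2 : s(a, u) ≠ s(u, ga) := by
    intro h; rw [Sym2.eq_iff] at h
    rcases h with ⟨h1, -⟩ | ⟨h1, -⟩
    · exact hua h1.symm
    · exact hgaa h1.symm
  have hu3 : s(u, v) ≠ s(u, ga) := by
    intro h; rw [Sym2.eq_iff] at h
    rcases h with ⟨-, h2⟩ | ⟨h1, -⟩
    · exact hgav h2.symm
    · exact hgau h1.symm
  have hdegu : U.deg u = 3 := by
    have h3 := three_le_udeg (v := u) hau huv huga (by simp) (by simp) (by simp) hu1 hu2 hu3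
    rcases hG.2 u huV with h | h <;> omega
  have huE := uall3 hdegu hau huv huga (by simp) (by simp) (by simp) hu1 hu2 hu3
  have hv1 : s(u, v) ≠ s(v, b) := by
    intro h; rw [Sym2.eq_iff] at h
    rcases h with ⟨h1, -⟩ | ⟨h1, -⟩
    · exact huvne h1
    · exact hbu h1.symm
  have hv2 : s(u, v) ≠ s(v, gb) := by
    intro h; rw [Sym2.eq_iff] at h
    rcases h with ⟨h1, -⟩ | ⟨h1, -⟩
    · exact huvne h1
    · exact hgbu h1.symm
  have hv3 : s(v, b) ≠ s(v, gb) := by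
    intro h; rw [Sym2.eq_iff] at h
    rcases h with ⟨-, h2⟩ | ⟨h1, -⟩
    · exact hgbb h2.symm
    · exact hgbv h1.symm
  have hdegv : U.deg v = 3 := by
    have h3 := three_le_udeg (v := v) huv hvb hvgb (by simp) (by simp) (by simp) hv1 hv2 hv3
    rcases hG.2 v hvV with h | h <;> omega
  have hvE := uall3 hdegv huv hvb hvgb (by simp) (by simp) (by simp) hv1 hv2 hv3
  have hagaE : s(a, ga) ∉ U.edges := by
    intro h
    have h' := haE _ h (by simp)
    rw [Sym2.eq_iff] at h'
    rcases h' with ⟨-, h'⟩ | ⟨h', -⟩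
    · exact hgau h'
    · exact hua h'.symm
  have hbgbE : s(b, gb) ∉ U.edges := by
    intro h
    have h' := hbE _ h (by simp)
    rw [Sym2.eq_iff] at h'
    rcases h' with ⟨h1, -⟩ | ⟨-, h2⟩
    · exact hvbne h1.symm
    · exact hgbv h2
  have hnewne : s(a, ga) ≠ s(b, gb) := by
    intro h; rw [Sym2.eq_iff] at h
    rcases h with ⟨h1, -⟩ | ⟨h1, -⟩
    · exact hab h1
    · exact hgba h1.symm
  have hchar : ∀ e, e ∈ W.edges ↔ e = s(a, ga) ∨ e = s(b, gb) ∨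
      (e ∈ U.edges ∧ u ∉ e ∧ v ∉ e) := by
    intro e
    rw [hWe]
    simp only [Finset.mem_insert, Finset.mem_sdiff, Finset.mem_singleton]
    constructor
    · rintro (rfl | rfl | ⟨heU, hnd⟩)
      · exact Or.inl rfl
      · exact Or.inr (Or.inl rfl)
      · push_neg at hnd
        obtain ⟨h1, h2, h3, h4, h5⟩ := hnd
        refine Or.inr (Or.inr ⟨heU, ?_, ?_⟩)
        · intro hu'
          rcases huE e heU hu' with rfl | rfl | rfl
          · exact h2 rfl
          · exact h1 rfl
          · exact h3 rfl
        · intro hv'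
          rcases hvE e heU hv' with rfl | rfl | rfl
          · exact h1 rfl
          · exact h4 rfl
          · exact h5 rfl
    · rintro (rfl | rfl | ⟨heU, h1, h2⟩)
      · exact Or.inl rfl
      · exact Or.inr (Or.inl rfl)
      · refine Or.inr (Or.inr ⟨heU, ?_⟩)
        push_neg
        refine ⟨?_, ?_, ?_, ?_, ?_⟩ <;> rintro rfl
        · exact h1 (by simp)
        · exact h1 (by simp)
        · exact h1 (by simp)
        · exact h2 (by simp)
        · exact h2 (by simp)
  have hvsub : ({u, v} : Finset ℕ) ⊆ U.verts := by
    intro x hx; simp at hx; rcases hx with rfl | rfl <;> assumption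
  have hV2 : 2 ≤ U.verts.card := by
    calc 2 = ({u, v} : Finset ℕ).card := (Finset.card_pair huvne).symm
    _ ≤ _ := Finset.card_le_card hvsub
  have hWvc : W.verts.card = U.verts.card - 2 := by
    rw [hWv, Finset.card_sdiff_of_subset hvsub, Finset.card_pair huvne]
  have huab : s(a, u) ≠ s(v, b) := by
    intro h; rw [Sym2.eq_iff] at h
    rcases h with ⟨h1, -⟩ | ⟨h1, -⟩
    · exact hav h1
    · exact hab h1
  have hvbga : s(v, b) ≠ s(u, ga) := by
    intro h; rw [Sym2.eq_iff] at h
    rcases h with ⟨h1, -⟩ | ⟨h1, -⟩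
    · exact huvne h1.symm
    · exact hgav h1.symm
  have hD4sub : ({s(u, v), s(a, u), s(v, b), s(u, ga)} : Finset (Sym2 ℕ)) ⊆ U.edges := by
    intro e he
    simp only [Finset.mem_insert, Finset.mem_singleton] at he
    rcases he with rfl | rfl | rfl | rfl <;> assumption
  have hD4c : ({s(u, v), s(a, u), s(v, b), s(u, ga)} : Finset (Sym2 ℕ)).card = 4 := by
    rw [Finset.card_insert_of_notMem (by simp [Ne.symm hu1, hv1, hu3]),
      Finset.card_insert_of_notMem (by simp [huab, hu2]),
      Finset.card_insert_of_notMem (by simp [hvbga]), Finset.card_singleton]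
  have hE4 : 4 ≤ U.edges.card := by
    calc 4 = ({s(u, v), s(a, u), s(v, b), s(u, ga)} : Finset (Sym2 ℕ)).card := hD4c.symm
    _ ≤ _ := Finset.card_le_card hD4sub
  have hWEc : W.edges.card ≤ U.edges.card - 4 + 2 := by
    rw [hWe]
    calc (insert s(a, ga) (insert s(b, gb)
          (U.edges \ {s(u, v), s(a, u), s(u, ga), s(v, b), s(v, gb)}))).card
        ≤ (insert s(b, gb)
            (U.edges \ {s(u, v), s(a, u), s(u, ga), s(v, b), s(v, gb)})).card + 1 :=
          Finset.card_insert_le _ _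
      _ ≤ (U.edges \ {s(u, v), s(a, u), s(u, ga), s(v, b), s(v, gb)}).card + 2 := by
          have := Finset.card_insert_le s(b, gb)
            (U.edges \ {s(u, v), s(a, u), s(u, ga), s(v, b), s(v, gb)})
          omega
      _ ≤ (U.edges \ {s(u, v), s(a, u), s(v, b), s(u, ga)}).card + 2 := by
          have hss : (U.edges \ {s(u, v), s(a, u), s(u, ga), s(v, b), s(v, gb)}) ⊆
              (U.edges \ ({s(u, v), s(a, u), s(v, b), s(u, ga)} : Finset (Sym2 ℕ))) := by
            apply Finset.sdiff_subset_sdiff (le_refl _)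
            intro e he
            simp only [Finset.mem_insert, Finset.mem_singleton] at he ⊢
            tauto
          have := Finset.card_le_card hss
          omega
      _ = U.edges.card - 4 + 2 := by rw [Finset.card_sdiff_of_subset hD4sub, hD4c]
  have hWEne : W.edges ≠ ∅ := by rw [hWe]; simp
  have hUEne : U.edges ≠ ∅ := fun h => by rw [h] at huv; simp at huv
  refine ⟨Or.inl ⟨?_, ?_⟩, ?_, ?_⟩
  · intro e he
    rcases (hchar e).1 he with rfl | rfl | ⟨heU, h1, h2⟩
    · refine ⟨by rw [Sym2.mk_isDiag_iff]; exact fun h => hgaa h.symm, ?_⟩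
      intro w hw
      rw [Sym2.mem_iff] at hw
      rw [hWv]
      simp only [Finset.mem_sdiff, Finset.mem_insert, Finset.mem_singleton]
      rcases hw with rfl | rfl
      · exact ⟨haV, by push_neg; exact ⟨fun h => hua h.symm, hav⟩⟩
      · exact ⟨hgaV, by push_neg; exact ⟨hgau, hgav⟩⟩
    · refine ⟨by rw [Sym2.mk_isDiag_iff]; exact fun h => hgbb h.symm, ?_⟩
      intro w hw
      rw [Sym2.mem_iff] at hw
      rw [hWv]
      simp only [Finset.mem_sdiff, Finset.mem_insert, Finset.mem_singleton]
      rcases hw with rfl | rfl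
      · exact ⟨hbV, by push_neg; exact ⟨hbu, fun h => hvbne h.symm⟩⟩
      · exact ⟨hgbV, by push_neg; exact ⟨hgbu, hgbv⟩⟩
    · refine ⟨(hG.1 e heU).1, ?_⟩
      intro w hw
      rw [hWv]
      simp only [Finset.mem_sdiff, Finset.mem_insert, Finset.mem_singleton]
      refine ⟨(hG.1 e heU).2 w hw, ?_⟩
      push_neg
      constructor <;> rintro rfl
      · exact h1 hw
      · exact h2 hw
  · intro w hw
    rw [hWv] at hw
    simp only [Finset.mem_sdiff, Finset.mem_insert, Finset.mem_singleton] at hw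
    obtain ⟨hwU, hw'⟩ := hw
    push_neg at hw'
    obtain ⟨hwu, hwv⟩ := hw'
    by_cases hwa : w = a
    · subst hwa
      left
      rw [udeg_filter]
      have hfe : W.edges.filter (fun e => w ∈ e) = {s(w, ga)} := by
        ext e
        simp only [Finset.mem_filter, Finset.mem_singleton]
        constructor
        · rintro ⟨he, hwe⟩
          rcases (hchar e).1 he with rfl | rfl | ⟨heU, h1, h2⟩
          · rfl
          · rw [Sym2.mem_iff] at hwe
            rcases hwe with rfl | rfl
            · exact absurd rfl hab
            · exact absurd rfl (Ne.symm hgba)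
          · exact absurd ((haE e heU hwe) ▸ (by simp : u ∈ s(w, u))) h1
        · rintro rfl
          exact ⟨(hchar _).2 (Or.inl rfl), by simp⟩
      rw [hfe, Finset.card_singleton]
    · by_cases hwb : w = b
      · subst hwb
        left
        rw [udeg_filter]
        have hfe : W.edges.filter (fun e => w ∈ e) = {s(w, gb)} := by
          ext e
          simp only [Finset.mem_filter, Finset.mem_singleton]
          constructor
          · rintro ⟨he, hwe⟩
            rcases (hchar e).1 he with rfl | rfl | ⟨heU, h1, h2⟩
            · rw [Sym2.mem_iff] at hwe
              rcases hwe with rfl | rfl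
              · exact absurd rfl hwa
              · exact absurd rfl (Ne.symm hgab)
            · rfl
            · exact absurd ((hbE e heU hwe) ▸ (by simp : v ∈ s(v, w))) h2
          · rintro rfl
            exact ⟨(hchar _).2 (Or.inr (Or.inl rfl)), by simp⟩
        rw [hfe, Finset.card_singleton]
      · by_cases hwga : w = ga
        · subst hwga
          by_cases hwgb : w = gb
          · subst hwgb
            have hdeq : W.deg w = U.deg w := by
              rw [udeg_filter, udeg_filter]
              have hfe : W.edges.filter (fun e => w ∈ e) =
                  insert s(a, w) (insert s(b, w)
                    ((U.edges.filter (fun e => w ∈ e)) \ {s(u, w), s(v, w)})) := by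
                ext e
                simp only [Finset.mem_filter, Finset.mem_insert, Finset.mem_sdiff,
                  Finset.mem_singleton]
                constructor
                · rintro ⟨he, hwe⟩
                  rcases (hchar e).1 he with rfl | rfl | ⟨heU, h1, h2⟩
                  · exact Or.inl rfl
                  · exact Or.inr (Or.inl rfl)
                  · refine Or.inr (Or.inr ⟨⟨heU, hwe⟩, ?_⟩)
                    rintro (rfl | rfl)
                    · exact h1 (by simp)
                    · exact h2 (by simp)
                · rintro (rfl | rfl | ⟨⟨heU, hwe⟩, hne⟩)
                  · exact ⟨(hchar _).2 (Or.inl rfl), by simp⟩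
                  · exact ⟨(hchar _).2 (Or.inr (Or.inl rfl)), by simp⟩
                  refine ⟨(hchar e).2 (Or.inr (Or.inr ⟨heU, ?_, ?_⟩)), hwe⟩
                  · intro hu'
                    rcases huE e heU hu' with rfl | rfl | rfl
                    · rw [Sym2.mem_iff] at hwe
                      rcases hwe with rfl | rfl
                      · exact hwa rfl
                      · exact hwu rfl
                    · rw [Sym2.mem_iff] at hwe
                      rcases hwe with rfl | rfl
                      · exact hwu rfl
                      · exact hwv rfl
                    · exact hne (Or.inl rfl)
                  · intro hv'
                    rcases hvE e heU hv' with rfl | rfl | rfl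
                    · rw [Sym2.mem_iff] at hwe
                      rcases hwe with rfl | rfl
                      · exact hwu rfl
                      · exact hwv rfl
                    · rw [Sym2.mem_iff] at hwe
                      rcases hwe with rfl | rfl
                      · exact hwv rfl
                      · exact hwb rfl
                    · exact hne (Or.inr rfl)
              rw [hfe]
              exact card_ins_sdiff2
                (fun h => hagaE (Finset.mem_filter.mp h).1)
                (fun h => hbgbE (Finset.mem_filter.mp h).1)
                hnewne
                (Finset.mem_filter.mpr ⟨huga, by simp⟩)
                (Finset.mem_filter.mpr ⟨hvgb, by simp⟩)
                (by
                  intro h; rw [Sym2.eq_iff] at h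
                  rcases h with ⟨h1, -⟩ | ⟨h1, -⟩
                  · exact huvne h1
                  · exact hgau h1.symm)
            rw [hdeq]
            exact hG.2 w hwU
          · have hdeq : W.deg w = U.deg w := by
              rw [udeg_filter, udeg_filter]
              have hfe : W.edges.filter (fun e => w ∈ e) =
                  insert s(a, w) ((U.edges.filter (fun e => w ∈ e)) \ {s(u, w)}) := by
                ext e
                simp only [Finset.mem_filter, Finset.mem_insert, Finset.mem_sdiff,
                  Finset.mem_singleton]
                constructor
                · rintro ⟨he, hwe⟩
                  rcases (hchar e).1 he with rfl | rfl | ⟨heU, h1, h2⟩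
                  · exact Or.inl rfl
                  · rw [Sym2.mem_iff] at hwe
                    rcases hwe with rfl | rfl
                    · exact absurd rfl hwb
                    · exact absurd rfl hwgb
                  · refine Or.inr ⟨⟨heU, hwe⟩, ?_⟩
                    rintro rfl
                    exact h1 (by simp)
                · rintro (rfl | ⟨⟨heU, hwe⟩, hne⟩)
                  · exact ⟨(hchar _).2 (Or.inl rfl), by simp⟩
                  refine ⟨(hchar e).2 (Or.inr (Or.inr ⟨heU, ?_, ?_⟩)), hwe⟩
                  · intro hu'
                    rcases huE e heU hu' with rfl | rfl | rfl
                    · rw [Sym2.mem_iff] at hwe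
                      rcases hwe with rfl | rfl
                      · exact hwa rfl
                      · exact hwu rfl
                    · rw [Sym2.mem_iff] at hwe
                      rcases hwe with rfl | rfl
                      · exact hwu rfl
                      · exact hwv rfl
                    · exact hne rfl
                  · intro hv'
                    rcases hvE e heU hv' with rfl | rfl | rfl
                    · rw [Sym2.mem_iff] at hwe
                      rcases hwe with rfl | rfl
                      · exact hwu rfl
                      · exact hwv rfl
                    · rw [Sym2.mem_iff] at hwe
                      rcases hwe with rfl | rfl
                      · exact hwv rfl
                      · exact hwb rfl
                    · rw [Sym2.mem_iff] at hwe
                      rcases hwe with rfl | rfl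
                      · exact hwv rfl
                      · exact hwgb rfl
              rw [hfe]
              exact card_ins_sdiff1
                (fun h => hagaE (Finset.mem_filter.mp h).1)
                (Finset.mem_filter.mpr ⟨huga, by simp⟩)
            rw [hdeq]
            exact hG.2 w hwU
        · by_cases hwgb : w = gb
          · subst hwgb
            have hdeq : W.deg w = U.deg w := by
              rw [udeg_filter, udeg_filter]
              have hfe : W.edges.filter (fun e => w ∈ e) =
                  insert s(b, w) ((U.edges.filter (fun e => w ∈ e)) \ {s(v, w)}) := by
                ext e
                simp only [Finset.mem_filter, Finset.mem_insert, Finset.mem_sdiff,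
                  Finset.mem_singleton]
                constructor
                · rintro ⟨he, hwe⟩
                  rcases (hchar e).1 he with rfl | rfl | ⟨heU, h1, h2⟩
                  · rw [Sym2.mem_iff] at hwe
                    rcases hwe with rfl | rfl
                    · exact absurd rfl hwa
                    · exact absurd rfl hwga
                  · exact Or.inl rfl
                  · refine Or.inr ⟨⟨heU, hwe⟩, ?_⟩
                    rintro rfl
                    exact h2 (by simp)
                · rintro (rfl | ⟨⟨heU, hwe⟩, hne⟩)
                  · exact ⟨(hchar _).2 (Or.inr (Or.inl rfl)), by simp⟩
                  refine ⟨(hchar e).2 (Or.inr (Or.inr ⟨heU, ?_, ?_⟩)), hwe⟩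
                  · intro hu'
                    rcases huE e heU hu' with rfl | rfl | rfl
                    · rw [Sym2.mem_iff] at hwe
                      rcases hwe with rfl | rfl
                      · exact hwa rfl
                      · exact hwu rfl
                    · rw [Sym2.mem_iff] at hwe
                      rcases hwe with rfl | rfl
                      · exact hwu rfl
                      · exact hwv rfl
                    · rw [Sym2.mem_iff] at hwe
                      rcases hwe with rfl | rfl
                      · exact hwu rfl
                      · exact hwga rfl
                  · intro hv'
                    rcases hvE e heU hv' with rfl | rfl | rfl
                    · rw [Sym2.mem_iff] at hwe
                      rcases hwe with rfl | rfl
                      · exact hwu rfl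
                      · exact hwv rfl
                    · rw [Sym2.mem_iff] at hwe
                      rcases hwe with rfl | rfl
                      · exact hwv rfl
                      · exact hwb rfl
                    · exact hne rfl
              rw [hfe]
              exact card_ins_sdiff1
                (fun h => hbgbE (Finset.mem_filter.mp h).1)
                (Finset.mem_filter.mpr ⟨hvgb, by simp⟩)
            rw [hdeq]
            exact hG.2 w hwU
          · have hdeq : W.deg w = U.deg w := udeg_congr (fun e => by
              constructor
              · rintro ⟨he, hwe⟩
                rcases (hchar e).1 he with rfl | rfl | ⟨heU, h1, h2⟩
                · rw [Sym2.mem_iff] at hwe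
                  rcases hwe with rfl | rfl
                  · exact absurd rfl hwa
                  · exact absurd rfl hwga
                · rw [Sym2.mem_iff] at hwe
                  rcases hwe with rfl | rfl
                  · exact absurd rfl hwb
                  · exact absurd rfl hwgb
                · exact ⟨heU, hwe⟩
              · rintro ⟨heU, hwe⟩
                refine ⟨(hchar e).2 (Or.inr (Or.inr ⟨heU, ?_, ?_⟩)), hwe⟩
                · intro hu'
                  rcases huE e heU hu' with rfl | rfl | rfl <;> rw [Sym2.mem_iff] at hwe
                  · rcases hwe with rfl | rfl
                    · exact hwa rfl
                    · exact hwu rfl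
                  · rcases hwe with rfl | rfl
                    · exact hwu rfl
                    · exact hwv rfl
                  · rcases hwe with rfl | rfl
                    · exact hwu rfl
                    · exact hwga rfl
                · intro hv'
                  rcases hvE e heU hv' with rfl | rfl | rfl <;> rw [Sym2.mem_iff] at hwe
                  · rcases hwe with rfl | rfl
                    · exact hwu rfl
                    · exact hwv rfl
                  · rcases hwe with rfl | rfl
                    · exact hwv rfl
                    · exact hwb rfl
                  · rcases hwe with rfl | rfl
                    · exact hwv rfl
                    · exact hwgb rfl)
            rw [hdeq]
            exact hG.2 w hwU
  · rw [phiU, phiU, if_neg hWEne, if_neg hUEne]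
    omega
  · omega

lemma unrootedMain (Us : ℕ → UNet) (X : Finset ℕ) (k : ℕ)
    (h0 : IsUnrootedBinaryNet (Us 0) X) (hseq : UReductionSeq Us k)
    (hk : (Us k).SingleVertex) : k = X.card + (Us 0).retNum - 1 := by
  have hGood0 : GoodU (Us 0) ∨ (Us 0).edges = ∅ := by
    rcases h0 with ⟨x, hX, hV, hE⟩ | ⟨hend, hconn, hdeg, hleaf⟩
    · exact Or.inr hE
    · exact Or.inl ⟨hend, hdeg⟩
  have hind : ∀ i, i ≤ k → (GoodU (Us i) ∨ (Us i).edges = ∅) ∧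
      phiU (Us i) + 2 * i = phiU (Us 0) ∧
      ((Us i).edges.card : ℤ) - (Us i).verts.card ≤
        ((Us 0).edges.card : ℤ) - (Us 0).verts.card := by
    intro i
    induction i with
    | zero => exact fun _ => ⟨hGood0, by omega, le_refl _⟩
    | succ n ih =>
      intro hle
      obtain ⟨hg, hphi, hz⟩ := ih (by omega)
      obtain ⟨r, hr⟩ := hseq n (by omega)
      rcases hg with hg | hg
      · have hstep : (GoodU (Us (n + 1)) ∨ (Us (n + 1)).edges = ∅) ∧
            phiU (Us (n + 1)) + 2 = phiU (Us n) ∧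
            ((Us (n + 1)).edges.card : ℤ) - (Us (n + 1)).verts.card ≤
              ((Us n).edges.card : ℤ) - (Us n).verts.card := by
          cases r with
          | cherry x y => exact stepU_cherry hg hr
          | ret x y => exact stepU_ret hg hr
        exact ⟨hstep.1, by omega, le_trans hstep.2.2 hz⟩
      · exact absurd hr (fun h => noStepU hg h)
  obtain ⟨-, hphik, hzk⟩ := hind k le_rfl
  have hvk : (Us k).verts.card = 1 := hk.1
  have hek : (Us k).edges = ∅ := hk.2
  have hekc : (Us k).edges.card = 0 := by rw [hek]; rfl
  have hphik1 : phiU (Us k) = 1 := by rw [phiU, if_pos hek, hvk]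
  -- so phiU (Us 0) = 1 + 2 k  and  (Us 0).edges.card + 1 ≥ (Us 0).verts.card
  rw [hphik1] at hphik
  rw [hekc, hvk] at hzk
  rcases h0 with ⟨x, hX, hV, hE⟩ | ⟨hend, hconn, hdeg, hleaf⟩
  · -- degenerate single-vertex network
    have hphi0 : phiU (Us 0) = 1 := by rw [phiU, if_pos hE, hV, Finset.card_singleton]
    have hret : (Us 0).retNum = 0 := by
      rw [UNet.retNum, hE, hV]
      simp
    rw [hX, hret, Finset.card_singleton]
    omega
  · by_cases hE : (Us 0).edges = ∅
    · -- impossible: all degrees 0 but must be 1 or 3, so no vertices; phi = 0 ≠ 1 + 2k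
      have hvempty : (Us 0).verts = ∅ := by
        rw [Finset.eq_empty_iff_forall_notMem]
        intro z hz
        have hd : (Us 0).deg z = 0 := by rw [UNet.deg, hE]; rfl
        rcases hdeg z hz with h | h <;> omega
      have hphi0 : phiU (Us 0) = 0 := by rw [phiU, if_pos hE, hvempty]; rfl
      omega
    · -- main count
      set E := (Us 0).edges.card with hEdef
      set V := (Us 0).verts.card with hVdef
      have hphi0 : phiU (Us 0) = V + 1 := by rw [phiU, if_neg hE]
      -- handshake
      have hhs : ∑ w ∈ (Us 0).verts, (Us 0).deg w = 2 * E := by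
        calc ∑ w ∈ (Us 0).verts, (Us 0).deg w
            = ∑ w ∈ (Us 0).verts, ∑ e ∈ (Us 0).edges, (if w ∈ e then 1 else 0) := by
              apply Finset.sum_congr rfl
              intro w hw
              rw [UNet.deg, Finset.card_filter]
          _ = ∑ e ∈ (Us 0).edges, ∑ w ∈ (Us 0).verts, (if w ∈ e then 1 else 0) :=
              Finset.sum_comm
          _ = ∑ e ∈ (Us 0).edges, 2 := by
              apply Finset.sum_congr rfl
              intro e he
              obtain ⟨hdiag, hmem⟩ := hend e he
              induction e using Sym2.inductionOn with
              | hf x y =>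
                have hxy : x ≠ y := by
                  intro h; exact hdiag (by rw [Sym2.mk_isDiag_iff]; exact h)
                have hxV : x ∈ (Us 0).verts := hmem x (by simp)
                have hyV : y ∈ (Us 0).verts := hmem y (by simp)
                rw [← Finset.card_filter]
                have : (Us 0).verts.filter (fun w => w ∈ s(x, y)) = {x, y} := by
                  ext w
                  simp only [Finset.mem_filter, Sym2.mem_iff, Finset.mem_insert,
                    Finset.mem_singleton]
                  constructor
                  · rintro ⟨-, h⟩; exact h
                  · rintro (rfl | rfl)
                    · exact ⟨hxV, Or.inl rfl⟩
                    · exact ⟨hyV, Or.inr rfl⟩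
                rw [this, Finset.card_pair hxy]
          _ = 2 * E := by rw [Finset.sum_const, smul_eq_mul, mul_comm]
      -- partition into leaves and degree-3 vertices
      set L := (Us 0).verts.filter (fun w => (Us 0).deg w = 1) with hLdef
      set T := (Us 0).verts.filter (fun w => (Us 0).deg w = 3) with hTdef
      have hdisj : Disjoint L T := by
        rw [Finset.disjoint_left]
        intro z hz hz'
        simp only [hLdef, hTdef, Finset.mem_filter] at hz hz'
        omega
      have hpart : (Us 0).verts = L ∪ T := by
        ext w
        simp only [Finset.mem_union, hLdef, hTdef, Finset.mem_filter]
        constructor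
        · intro hw
          rcases hdeg w hw with h | h
          · exact Or.inl ⟨hw, h⟩
          · exact Or.inr ⟨hw, h⟩
        · rintro (⟨hw, -⟩ | ⟨hw, -⟩) <;> exact hw
      have hsumL : ∑ w ∈ L, (Us 0).deg w = L.card * 1 := by
        rw [Finset.sum_congr rfl (fun w hw => (Finset.mem_filter.mp hw).2),
          Finset.sum_const, smul_eq_mul]
      have hsumT : ∑ w ∈ T, (Us 0).deg w = T.card * 3 := by
        rw [Finset.sum_congr rfl (fun w hw => (Finset.mem_filter.mp hw).2),
          Finset.sum_const, smul_eq_mul]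
      have hsplit : ∑ w ∈ (Us 0).verts, (Us 0).deg w = L.card * 1 + T.card * 3 := by
        rw [hpart, Finset.sum_union hdisj, hsumL, hsumT]
      have hvLT : V = L.card + T.card := by
        rw [hVdef, hpart, Finset.card_union_of_disjoint hdisj]
      have hXL : X = L := by
        ext w
        rw [← hleaf w]
        simp only [hLdef, Finset.mem_filter, UNet.IsLeaf]
      have hretn : (Us 0).retNum = E - (V - 1) := rfl
      rw [hXL, hretn]
      omega

end CSL

/-- A complete cherry-reduction sequence of length `k` for a phylogenetic
network `N` on `X` satisfies `k = |X| + r(N) - 1` (rooted and unrooted case). -/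
theorem complete_sequence_length :
    (∀ (Ns : ℕ → DNet) (X : Finset ℕ) (k : ℕ),
      IsRootedBinaryNet (Ns 0) X → RReductionSeq Ns k → (Ns k).SingleVertex →
      k = X.card + (Ns 0).retNum - 1) ∧
    (∀ (Us : ℕ → UNet) (X : Finset ℕ) (k : ℕ),
      IsUnrootedBinaryNet (Us 0) X → UReductionSeq Us k → (Us k).SingleVertex →
      k = X.card + (Us 0).retNum - 1) :=
  ⟨CSL.rootedMain, CSL.unrootedMain⟩
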